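/- arXiv:2309.08370 — 3 statements merged into one kernel-verified Lean document; each statement's English description precedes it below -/
import Mathlib

section
/- For an integer t ≥ 3, if e1 and e2 are two distinct adjacent edges of the complete bipartite graph K_{t,t}, then the number of copies of the path P_5 in K_{t,t} containing both e1 and e2 is exactly 3(t-1)(t-2). -/
open SimpleGraph Sum

variable {t : ℕ}

private abbrev BG (t : ℕ) := completeBipartiteGraph (Fin t) (Fin t)

/-- pattern relation of a 5-vertex path -/
def prel (a b c d e x y : Fin t ⊕ Fin t) : Prop :=
  (x = a ∧ y = b) ∨ (x = b ∧ y = a) ∨ (x = b ∧ y = c) ∨ (x = c ∧ y = b) ∨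
  (x = c ∧ y = d) ∨ (x = d ∧ y = c) ∨ (x = d ∧ y = e) ∨ (x = e ∧ y = d)

def pk (a b c d e : Fin t ⊕ Fin t) : (BG t).Subgraph where
  verts := {a, b, c, d, e}
  Adj x y := (BG t).Adj x y ∧ prel a b c d e x y
  adj_sub h := h.1
  edge_vert h := by
    simp only [Set.mem_insert_iff, Set.mem_singleton_iff]
    rcases h.2 with ⟨rfl,_⟩|⟨rfl,_⟩|⟨rfl,_⟩|⟨rfl,_⟩|⟨rfl,_⟩|⟨rfl,_⟩|⟨rfl,_⟩|⟨rfl,_⟩ <;> tauto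
  symm := ⟨fun x y h => by
    refine ⟨h.1.symm, ?_⟩
    rcases h.2 with ⟨rfl,rfl⟩|⟨rfl,rfl⟩|⟨rfl,rfl⟩|⟨rfl,rfl⟩|⟨rfl,rfl⟩|⟨rfl,rfl⟩|⟨rfl,rfl⟩|⟨rfl,rfl⟩
    · exact Or.inr (Or.inl ⟨rfl,rfl⟩)
    · exact Or.inl ⟨rfl,rfl⟩
    · exact Or.inr (Or.inr (Or.inr (Or.inl ⟨rfl,rfl⟩)))
    · exact Or.inr (Or.inr (Or.inl ⟨rfl,rfl⟩))
    · exact Or.inr (Or.inr (Or.inr (Or.inr (Or.inr (Or.inl ⟨rfl,rfl⟩)))))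
    · exact Or.inr (Or.inr (Or.inr (Or.inr (Or.inl ⟨rfl,rfl⟩))))
    · exact Or.inr (Or.inr (Or.inr (Or.inr (Or.inr (Or.inr (Or.inr ⟨rfl,rfl⟩))))))
    · exact Or.inr (Or.inr (Or.inr (Or.inr (Or.inr (Or.inr (Or.inl ⟨rfl,rfl⟩))))))⟩

lemma pk_verts (a b c d e : Fin t ⊕ Fin t) : (pk a b c d e).verts = {a,b,c,d,e} := rfl

lemma pk_adj (a b c d e x y : Fin t ⊕ Fin t) :
    (pk a b c d e).Adj x y ↔ (BG t).Adj x y ∧ prel a b c d e x y := Iff.rfl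

set_option maxHeartbeats 2000000 in
lemma pk_rev (a b c d e : Fin t ⊕ Fin t) : pk a b c d e = pk e d c b a := by
  apply SimpleGraph.Subgraph.ext
  · show ({a,b,c,d,e} : Set _) = {e,d,c,b,a}
    ext z; simp [Set.mem_insert_iff]; tauto
  · ext x y
    rw [pk_adj, pk_adj]
    unfold prel; tauto

lemma pk_iso {a b c d e : Fin t ⊕ Fin t}
    (hab : a≠b) (hac : a≠c) (had : a≠d) (hae : a≠e) (hbc : b≠c) (hbd : b≠d)
    (hbe : b≠e) (hcd : c≠d) (hce : c≠e) (hde : d≠e)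
    (h1 : (BG t).Adj a b) (h2 : (BG t).Adj b c) (h3 : (BG t).Adj c d)
    (h4 : (BG t).Adj d e) :
    Nonempty ((pk a b c d e).coe ≃g pathGraph 5) := by
  have ma : a ∈ (pk a b c d e).verts := by simp [pk_verts]
  have mb : b ∈ (pk a b c d e).verts := by simp [pk_verts]
  have mc : c ∈ (pk a b c d e).verts := by simp [pk_verts]
  have md : d ∈ (pk a b c d e).verts := by simp [pk_verts]
  have me : e ∈ (pk a b c d e).verts := by simp [pk_verts]
  let f : Fin 5 → (pk a b c d e).verts := ![⟨a, ma⟩, ⟨b, mb⟩, ⟨c, mc⟩, ⟨d, md⟩, ⟨e, me⟩]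
  have hbij : Function.Bijective f := by
    constructor
    · intro i j hij
      fin_cases i <;> fin_cases j <;> simp_all [f] <;>
        first
          | rfl
          | exact absurd hij hab | exact absurd hij hac | exact absurd hij had
          | exact absurd hij hae | exact absurd hij hbc | exact absurd hij hbd
          | exact absurd hij hbe | exact absurd hij hcd | exact absurd hij hce
          | exact absurd hij hde
          | exact absurd hij.symm hab | exact absurd hij.symm hac
          | exact absurd hij.symm had | exact absurd hij.symm hae
          | exact absurd hij.symm hbc | exact absurd hij.symm hbd
          | exact absurd hij.symm hbe | exact absurd hij.symm hcd
          | exact absurd hij.symm hce | exact absurd hij.symm hde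
    · rintro ⟨v, hv⟩
      rw [pk_verts] at hv
      rcases hv with rfl|rfl|rfl|rfl|rfl
      · exact ⟨0, rfl⟩
      · exact ⟨1, rfl⟩
      · exact ⟨2, rfl⟩
      · exact ⟨3, rfl⟩
      · exact ⟨4, rfl⟩
  have h1' : a.isLeft ∧ b.isRight ∨ a.isRight ∧ b.isLeft := by simpa using h1
  have h2' : b.isLeft ∧ c.isRight ∨ b.isRight ∧ c.isLeft := by simpa using h2
  have h3' : c.isLeft ∧ d.isRight ∨ c.isRight ∧ d.isLeft := by simpa using h3
  have h4' : d.isLeft ∧ e.isRight ∨ d.isRight ∧ e.isLeft := by simpa using h4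
  have h1s : b.isLeft ∧ a.isRight ∨ b.isRight ∧ a.isLeft := by simpa using h1.symm
  have h2s : c.isLeft ∧ b.isRight ∨ c.isRight ∧ b.isLeft := by simpa using h2.symm
  have h3s : d.isLeft ∧ c.isRight ∨ d.isRight ∧ c.isLeft := by simpa using h3.symm
  have h4s : e.isLeft ∧ d.isRight ∨ e.isRight ∧ d.isLeft := by simpa using h4.symm
  refine ⟨(RelIso.mk (Equiv.ofBijective f hbij) ?_).symm⟩
  intro i j
  show (pk a b c d e).Adj (f i) (f j) ↔ (pathGraph 5).Adj i j
  fin_cases i <;> fin_cases j <;>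
    simp [f, pk_adj, prel, pathGraph_adj, h1, h2, h3, h4, h1.symm, h2.symm, h3.symm, h4.symm,
      hab, hac, had, hae, hbc, hbd, hbe, hcd, hce, hde,
      hab.symm, hac.symm, had.symm, hae.symm, hbc.symm, hbd.symm, hbe.symm, hcd.symm,
      hce.symm, hde.symm, h1', h2', h3', h4', h1s, h2s, h3s, h4s] <;> decide

lemma eq_pk_of_iso (H : (BG t).Subgraph) (φ : H.coe ≃g pathGraph 5) :
    ∃ f : Fin 5 → Fin t ⊕ Fin t, Function.Injective f ∧
      ((BG t).Adj (f 0) (f 1) ∧ (BG t).Adj (f 1) (f 2) ∧ (BG t).Adj (f 2) (f 3) ∧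
        (BG t).Adj (f 3) (f 4)) ∧
      H = pk (f 0) (f 1) (f 2) (f 3) (f 4) := by
  classical
  let g : Fin 5 → H.verts := fun i => φ.symm i
  let f : Fin 5 → Fin t ⊕ Fin t := fun i => (g i : Fin t ⊕ Fin t)
  have hfinj : Function.Injective f := fun i j h => φ.symm.injective (Subtype.ext h)
  have hmem : ∀ i, f i ∈ H.verts := fun i => (g i).2
  have hrep : ∀ v, v ∈ H.verts → ∃ i, v = f i := by
    intro v hv
    refine ⟨φ ⟨v, hv⟩, ?_⟩
    simp [f, g]
  have key : ∀ i j : Fin 5, H.Adj (f i) (f j) ↔ (pathGraph 5).Adj i j := by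
    intro i j
    have h2 : H.coe.Adj (g i) (g j) ↔ (pathGraph 5).Adj i j := φ.symm.map_rel_iff
    rw [SimpleGraph.Subgraph.coe_adj] at h2
    exact h2
  have hp : ∀ i j : Fin 5, (pathGraph 5).Adj i j →
      prel (f 0) (f 1) (f 2) (f 3) (f 4) (f i) (f j) := by
    intro i j hij
    rw [pathGraph_adj] at hij
    unfold prel
    fin_cases i <;> fin_cases j <;> simp_all
  have hcons : ∀ k l : Fin 5, (pathGraph 5).Adj k l → (BG t).Adj (f k) (f l) :=
    fun k l hkl => H.adj_sub ((key k l).mpr hkl)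
  refine ⟨f, hfinj, ⟨hcons 0 1 (by rw [pathGraph_adj]; decide),
    hcons 1 2 (by rw [pathGraph_adj]; decide), hcons 2 3 (by rw [pathGraph_adj]; decide),
    hcons 3 4 (by rw [pathGraph_adj]; decide)⟩, ?_⟩
  apply SimpleGraph.Subgraph.ext
  · rw [pk_verts]
    ext v
    constructor
    · intro hv
      obtain ⟨i, rfl⟩ := hrep v hv
      have : ∀ i : Fin 5, f i ∈ ({f 0, f 1, f 2, f 3, f 4} : Set _) := by
        intro i
        fin_cases i <;> simp
      exact this _
    · intro hv
      rcases hv with rfl|rfl|rfl|rfl|rfl <;> exact hmem _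
  · ext x y
    rw [pk_adj]
    constructor
    · intro h
      refine ⟨H.adj_sub h, ?_⟩
      obtain ⟨i, rfl⟩ := hrep x (H.edge_vert h)
      obtain ⟨j, rfl⟩ := hrep y (H.edge_vert h.symm)
      exact hp i j ((key i j).mp h)
    · rintro ⟨-, h⟩
      rcases h with ⟨rfl,rfl⟩|⟨rfl,rfl⟩|⟨rfl,rfl⟩|⟨rfl,rfl⟩|⟨rfl,rfl⟩|⟨rfl,rfl⟩|⟨rfl,rfl⟩|⟨rfl,rfl⟩ <;>
        exact (key _ _).mpr (by rw [pathGraph_adj]; decide)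

section families
variable {a b1 b2 x y x' y' : Fin t}

lemma injA (hb : b1 ≠ b2) (hx : x ≠ a) (hx' : x' ≠ a) (hy : y ≠ a) (hy' : y' ≠ a)
    (h : pk (inl x) (inr b1) (inl a) (inr b2) (inl y)
       = pk (inl x') (inr b1) (inl a) (inr b2) (inl y')) : x = x' ∧ y = y' := by
  have h1 : (pk (inl x') (inr b1) (inl a) (inr b2) (inl y')).Adj (inl x) (inr b1) :=
    h ▸ ⟨by simp, Or.inl ⟨rfl, rfl⟩⟩
  have h2 : (pk (inl x') (inr b1) (inl a) (inr b2) (inl y')).Adj (inr b2) (inl y) :=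
    h ▸ ⟨by simp, by unfold prel; tauto⟩
  constructor
  · rcases h1.2 with ⟨h3,h4⟩|⟨h3,h4⟩|⟨h3,h4⟩|⟨h3,h4⟩|⟨h3,h4⟩|⟨h3,h4⟩|⟨h3,h4⟩|⟨h3,h4⟩ <;>
      simp_all
  · rcases h2.2 with ⟨h3,h4⟩|⟨h3,h4⟩|⟨h3,h4⟩|⟨h3,h4⟩|⟨h3,h4⟩|⟨h3,h4⟩|⟨h3,h4⟩|⟨h3,h4⟩ <;>
      simp_all

lemma injB (hb : b1 ≠ b2) (hx : x ≠ a) (hx' : x' ≠ a) (hy1 : y ≠ b1) (hy1' : y' ≠ b1)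
    (hy2 : y ≠ b2) (hy2' : y' ≠ b2)
    (h : pk (inr b1) (inl a) (inr b2) (inl x) (inr y)
       = pk (inr b1) (inl a) (inr b2) (inl x') (inr y')) : x = x' ∧ y = y' := by
  have h1 : (pk (inr b1) (inl a) (inr b2) (inl x') (inr y')).Adj (inr b2) (inl x) :=
    h ▸ ⟨by simp, by unfold prel; tauto⟩
  have hxx : x = x' := by
    rcases h1.2 with ⟨h3,h4⟩|⟨h3,h4⟩|⟨h3,h4⟩|⟨h3,h4⟩|⟨h3,h4⟩|⟨h3,h4⟩|⟨h3,h4⟩|⟨h3,h4⟩ <;>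
      simp_all
  subst hxx
  have h2 : (pk (inr b1) (inl a) (inr b2) (inl x) (inr y')).Adj (inl x) (inr y) :=
    h ▸ ⟨by simp, by unfold prel; tauto⟩
  refine ⟨rfl, ?_⟩
  rcases h2.2 with ⟨h3,h4⟩|⟨h3,h4⟩|⟨h3,h4⟩|⟨h3,h4⟩|⟨h3,h4⟩|⟨h3,h4⟩|⟨h3,h4⟩|⟨h3,h4⟩ <;>
    simp_all

lemma injAB (hy1 : y' ≠ b1) (hy2 : y' ≠ b2)
    (h : pk (inl x) (inr b1) (inl a) (inr b2) (inl y)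
       = pk (inr b1) (inl a) (inr b2) (inl x') (inr y')) : False := by
  have hv : inr y' ∈ (pk (inl x) (inr b1) (inl a) (inr b2) (inl y)).verts := by
    rw [h, pk_verts]; simp
  rw [pk_verts] at hv
  simp_all

lemma injBC (hb : b1 ≠ b2) (hx : x ≠ a) (hy2' : y' ≠ b2)
    (h : pk (inr b1) (inl a) (inr b2) (inl x) (inr y)
       = pk (inr b2) (inl a) (inr b1) (inl x') (inr y')) : False := by
  have h1 : (pk (inr b2) (inl a) (inr b1) (inl x') (inr y')).Adj (inr b2) (inl x) :=
    h ▸ ⟨by simp, by unfold prel; tauto⟩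
  rcases h1.2 with ⟨h3,h4⟩|⟨h3,h4⟩|⟨h3,h4⟩|⟨h3,h4⟩|⟨h3,h4⟩|⟨h3,h4⟩|⟨h3,h4⟩|⟨h3,h4⟩ <;>
    simp_all

end families

lemma adj_to_inl {b : Fin t} {z} (h : (BG t).Adj (inr b) z) : ∃ x, z = inl x := by
  cases z with
  | inl x => exact ⟨x, rfl⟩
  | inr y => simp at h

lemma adj_to_inr {a : Fin t} {z} (h : (BG t).Adj (inl a) z) : ∃ y, z = inr y := by
  cases z with
  | inl x => simp at h
  | inr y => exact ⟨y, rfl⟩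

lemma surj_pk {a b1 b2 : Fin t} (H : (BG t).Subgraph)
    (hiso : Nonempty (H.coe ≃g pathGraph 5)) (hb : b1 ≠ b2)
    (h1 : s(inl a, inr b1) ∈ H.edgeSet) (h2 : s(inl a, inr b2) ∈ H.edgeSet) :
    (∃ x y, x ≠ a ∧ y ≠ a ∧ x ≠ y ∧ H = pk (inl x) (inr b1) (inl a) (inr b2) (inl y)) ∨
    (∃ x y, x ≠ a ∧ y ≠ b1 ∧ y ≠ b2 ∧ H = pk (inr b1) (inl a) (inr b2) (inl x) (inr y)) ∨
    (∃ x y, x ≠ a ∧ y ≠ b1 ∧ y ≠ b2 ∧ H = pk (inr b2) (inl a) (inr b1) (inl x) (inr y)) := by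
  obtain ⟨φ⟩ := hiso
  obtain ⟨f, hfinj, ⟨hc01, hc12, hc23, hc34⟩, hH⟩ := eq_pk_of_iso H φ
  rw [SimpleGraph.Subgraph.mem_edgeSet, hH] at h1 h2
  have hp1 := h1.2
  have hp2 := h2.2
  unfold prel at hp1 hp2
  rcases hp1 with ⟨ha1,hb1⟩|⟨ha1,hb1⟩|⟨ha1,hb1⟩|⟨ha1,hb1⟩|⟨ha1,hb1⟩|⟨ha1,hb1⟩|⟨ha1,hb1⟩|⟨ha1,hb1⟩ <;>
    rcases hp2 with ⟨ha2,hb2⟩|⟨ha2,hb2⟩|⟨ha2,hb2⟩|⟨ha2,hb2⟩|⟨ha2,hb2⟩|⟨ha2,hb2⟩|⟨ha2,hb2⟩|⟨ha2,hb2⟩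
  all_goals try exact absurd (hfinj (ha1.symm.trans ha2)) (by decide)
  all_goals try exact absurd (hb1.trans hb2.symm) (by simp [hb])
  -- six surviving cases
  · -- b1 at 0, a at 1, b2 at 2 : family B
    refine Or.inr (Or.inl ?_)
    obtain ⟨x, hx⟩ := adj_to_inl (b := b2) (by rw [hb2]; exact hc23)
    obtain ⟨yy, hy⟩ := adj_to_inr (a := x) (by rw [← hx]; exact hc34)
    refine ⟨x, yy, ?_, ?_, ?_, ?_⟩
    · intro hxa; subst hxa
      exact absurd (hfinj ((hx.trans ha1))) (by decide)
    · intro hyb; subst hyb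
      exact absurd (hfinj ((hy.trans hb1))) (by decide)
    · intro hyb; subst hyb
      exact absurd (hfinj ((hy.trans hb2))) (by decide)
    · rw [hH, hb1, ha1, hb2, hx, hy]
  · -- b1 at 2, a at 1, b2 at 0 : family C
    refine Or.inr (Or.inr ?_)
    obtain ⟨x, hx⟩ := adj_to_inl (b := b1) (by rw [hb1]; exact hc23)
    obtain ⟨yy, hy⟩ := adj_to_inr (a := x) (by rw [← hx]; exact hc34)
    refine ⟨x, yy, ?_, ?_, ?_, ?_⟩
    · intro hxa; subst hxa
      exact absurd (hfinj ((hx.trans ha1))) (by decide)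
    · intro hyb; subst hyb
      exact absurd (hfinj ((hy.trans hb1))) (by decide)
    · intro hyb; subst hyb
      exact absurd (hfinj ((hy.trans hb2))) (by decide)
    · rw [hH, hb1, ha1, hb2, hx, hy]
  · -- a at 2, b1 at 1, b2 at 3 : family A
    refine Or.inl ?_
    obtain ⟨x, hx⟩ := adj_to_inl (b := b1) (by rw [hb1]; exact hc01.symm)
    obtain ⟨yy, hy⟩ := adj_to_inl (b := b2) (by rw [hb2]; exact hc34)
    refine ⟨x, yy, ?_, ?_, ?_, ?_⟩
    · intro hxa; subst hxa
      exact absurd (hfinj ((hx.trans ha1))) (by decide)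
    · intro hya; subst hya
      exact absurd (hfinj ((hy.trans ha1))) (by decide)
    · intro hxy; rw [hxy] at hx
      exact absurd (hfinj ((hx.trans hy.symm))) (by decide)
    · rw [hH, hb1, ha1, hb2, hx, hy]
  · -- a at 2, b2 at 1, b1 at 3 : family A reversed
    refine Or.inl ?_
    obtain ⟨x, hx⟩ := adj_to_inl (b := b2) (by rw [hb2]; exact hc01.symm)
    obtain ⟨yy, hy⟩ := adj_to_inl (b := b1) (by rw [hb1]; exact hc34)
    refine ⟨yy, x, ?_, ?_, ?_, ?_⟩
    · intro hya; subst hya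
      exact absurd (hfinj ((hy.trans ha1))) (by decide)
    · intro hxa; subst hxa
      exact absurd (hfinj ((hx.trans ha1))) (by decide)
    · intro hxy; rw [hxy] at hy
      exact absurd (hfinj ((hy.trans hx.symm))) (by decide)
    · rw [hH, pk_rev, hb1, ha1, hb2, hx, hy]
  · -- a at 3, b1 at 2, b2 at 4 : family C reversed
    refine Or.inr (Or.inr ?_)
    obtain ⟨x, hx⟩ := adj_to_inl (b := b1) (by rw [hb1]; exact hc12.symm)
    obtain ⟨yy, hy⟩ := adj_to_inr (a := x) (by rw [← hx]; exact hc01.symm)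
    refine ⟨x, yy, ?_, ?_, ?_, ?_⟩
    · intro hxa; subst hxa
      exact absurd (hfinj ((hx.trans ha1))) (by decide)
    · intro hyb; subst hyb
      exact absurd (hfinj ((hy.trans hb1))) (by decide)
    · intro hyb; subst hyb
      exact absurd (hfinj ((hy.trans hb2))) (by decide)
    · rw [hH, pk_rev, hb1, ha1, hb2, hx, hy]
  · -- a at 3, b2 at 2, b1 at 4 : family B reversed
    refine Or.inr (Or.inl ?_)
    obtain ⟨x, hx⟩ := adj_to_inl (b := b2) (by rw [hb2]; exact hc12.symm)
    obtain ⟨yy, hy⟩ := adj_to_inr (a := x) (by rw [← hx]; exact hc01.symm)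
    refine ⟨x, yy, ?_, ?_, ?_, ?_⟩
    · intro hxa; subst hxa
      exact absurd (hfinj ((hx.trans ha1))) (by decide)
    · intro hyb; subst hyb
      exact absurd (hfinj ((hy.trans hb1))) (by decide)
    · intro hyb; subst hyb
      exact absurd (hfinj ((hy.trans hb2))) (by decide)
    · rw [hH, pk_rev, hb1, ha1, hb2, hx, hy]

lemma no_inr_vert {a b1 b2 x y y' : Fin t} (K : (BG t).Subgraph)
    (h : pk (inl x) (inr b1) (inl a) (inr b2) (inl y) = K)
    (hv : inr y' ∈ K.verts) (hy1 : y' ≠ b1) (hy2 : y' ≠ b2) : False := by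
  rw [← h, pk_verts] at hv
  simp_all

lemma key (ht : 3 ≤ t) (a b1 b2 : Fin t) (hb : b1 ≠ b2) :
    Nat.card {H : (BG t).Subgraph // Nonempty (H.coe ≃g pathGraph 5) ∧
      s(inl a, inr b1) ∈ H.edgeSet ∧ s(inl a, inr b2) ∈ H.edgeSet} = 3 * (t-1) * (t-2) := by
  classical
  have memA : ∀ x y : Fin t, x ≠ a → y ≠ a → x ≠ y →
      Nonempty ((pk (inl x) (inr b1) (inl a) (inr b2) (inl y)).coe ≃g pathGraph 5) ∧
      s(inl a, inr b1) ∈ (pk (inl x) (inr b1) (inl a) (inr b2) (inl y)).edgeSet ∧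
      s(inl a, inr b2) ∈ (pk (inl x) (inr b1) (inl a) (inr b2) (inl y)).edgeSet := by
    intro x y hx hy hxy
    refine ⟨pk_iso (by simp) (by simp [hx]) (by simp) (by simp [hxy]) (by simp)
      (by simp [hb]) (by simp) (by simp) (by simpa using (Ne.symm hy)) (by simp)
      (by simp) (by simp) (by simp) (by simp), ?_, ?_⟩
    · exact SimpleGraph.Subgraph.mem_edgeSet.mpr ⟨by simp, by unfold prel; tauto⟩
    · exact SimpleGraph.Subgraph.mem_edgeSet.mpr ⟨by simp, by unfold prel; tauto⟩
  have memB : ∀ x y : Fin t, x ≠ a → y ≠ b1 → y ≠ b2 →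
      Nonempty ((pk (inr b1) (inl a) (inr b2) (inl x) (inr y)).coe ≃g pathGraph 5) ∧
      s(inl a, inr b1) ∈ (pk (inr b1) (inl a) (inr b2) (inl x) (inr y)).edgeSet ∧
      s(inl a, inr b2) ∈ (pk (inr b1) (inl a) (inr b2) (inl x) (inr y)).edgeSet := by
    intro x y hx hy1 hy2
    refine ⟨pk_iso (by simp) (by simp [hb]) (by simp) (by simpa using (Ne.symm hy1))
      (by simp) (by simpa using (Ne.symm hx)) (by simp) (by simp)
      (by simpa using (Ne.symm hy2)) (by simp) (by simp) (by simp) (by simp) (by simp), ?_, ?_⟩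
    · exact SimpleGraph.Subgraph.mem_edgeSet.mpr ⟨by simp, by unfold prel; tauto⟩
    · exact SimpleGraph.Subgraph.mem_edgeSet.mpr ⟨by simp, by unfold prel; tauto⟩
  have memC : ∀ x y : Fin t, x ≠ a → y ≠ b1 → y ≠ b2 →
      Nonempty ((pk (inr b2) (inl a) (inr b1) (inl x) (inr y)).coe ≃g pathGraph 5) ∧
      s(inl a, inr b1) ∈ (pk (inr b2) (inl a) (inr b1) (inl x) (inr y)).edgeSet ∧
      s(inl a, inr b2) ∈ (pk (inr b2) (inl a) (inr b1) (inl x) (inr y)).edgeSet := by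
    intro x y hx hy1 hy2
    refine ⟨pk_iso (by simp) (by simp [hb.symm]) (by simp) (by simpa using (Ne.symm hy2))
      (by simp) (by simpa using (Ne.symm hx)) (by simp) (by simp)
      (by simpa using (Ne.symm hy1)) (by simp) (by simp) (by simp) (by simp) (by simp), ?_, ?_⟩
    · exact SimpleGraph.Subgraph.mem_edgeSet.mpr ⟨by simp, by unfold prel; tauto⟩
    · exact SimpleGraph.Subgraph.mem_edgeSet.mpr ⟨by simp, by unfold prel; tauto⟩
  let TA := {p : Fin t × Fin t // p.1 ≠ a ∧ p.2 ≠ a ∧ p.1 ≠ p.2}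
  let TB := {p : Fin t × Fin t // p.1 ≠ a ∧ p.2 ≠ b1 ∧ p.2 ≠ b2}
  let F : TA ⊕ TB ⊕ TB → {H : (BG t).Subgraph // Nonempty (H.coe ≃g pathGraph 5) ∧
      s(inl a, inr b1) ∈ H.edgeSet ∧ s(inl a, inr b2) ∈ H.edgeSet} := fun z =>
    match z with
    | Sum.inl ⟨⟨x, y⟩, hx, hy, hxy⟩ =>
        ⟨pk (inl x) (inr b1) (inl a) (inr b2) (inl y), memA x y hx hy hxy⟩
    | Sum.inr (Sum.inl ⟨⟨x, y⟩, hx, hy1, hy2⟩) =>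
        ⟨pk (inr b1) (inl a) (inr b2) (inl x) (inr y), memB x y hx hy1 hy2⟩
    | Sum.inr (Sum.inr ⟨⟨x, y⟩, hx, hy1, hy2⟩) =>
        ⟨pk (inr b2) (inl a) (inr b1) (inl x) (inr y), memC x y hx hy1 hy2⟩
  have hFbij : Function.Bijective F := by
    constructor
    · rintro (⟨⟨x,y⟩,hx,hy,hxy⟩|⟨⟨x,y⟩,hx,hy1,hy2⟩|⟨⟨x,y⟩,hx,hy1,hy2⟩)
          (⟨⟨x',y'⟩,hx',hy',hxy'⟩|⟨⟨x',y'⟩,hx',hy1',hy2'⟩|⟨⟨x',y'⟩,hx',hy1',hy2'⟩) h <;>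
        rw [Subtype.ext_iff] at h
      · obtain ⟨rfl, rfl⟩ := injA hb hx hx' hy hy' h
        rfl
      · exact absurd (no_inr_vert _ h (by rw [pk_verts]; simp) hy1' hy2') (by simp)
      · exact absurd (no_inr_vert _ h (by rw [pk_verts]; simp) hy1' hy2') (by simp)
      · exact absurd (no_inr_vert _ h.symm (by rw [pk_verts]; simp) hy1 hy2) (by simp)
      · obtain ⟨rfl, rfl⟩ := injB hb hx hx' hy1 hy1' hy2 hy2' h
        rfl
      · exact absurd (injBC hb hx hy2' h) (by simp)
      · exact absurd (no_inr_vert _ h.symm (by rw [pk_verts]; simp) hy1 hy2) (by simp)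
      · exact absurd (injBC hb.symm hx hy1' h) (by simp)
      · obtain ⟨rfl, rfl⟩ := injB hb.symm hx hx' hy2 hy2' hy1 hy1' h
        rfl
    · rintro ⟨H, hiso, h1, h2⟩
      rcases surj_pk H hiso hb h1 h2 with ⟨x,y,hx,hy,hxy,hHeq⟩ | ⟨x,y,hx,hy1,hy2,hHeq⟩ |
        ⟨x,y,hx,hy1,hy2,hHeq⟩
      · exact ⟨Sum.inl ⟨⟨x,y⟩,hx,hy,hxy⟩, Subtype.ext hHeq.symm⟩
      · exact ⟨Sum.inr (Sum.inl ⟨⟨x,y⟩,hx,hy1,hy2⟩), Subtype.ext hHeq.symm⟩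
      · exact ⟨Sum.inr (Sum.inr ⟨⟨x,y⟩,hx,hy1,hy2⟩), Subtype.ext hHeq.symm⟩
  rw [← Nat.card_congr (Equiv.ofBijective F hFbij)]
  rw [Nat.card_sum, Nat.card_sum]
  have cA : Nat.card TA = (t-1) * (t-2) := by
    rw [Nat.card_eq_fintype_card, Fintype.card_subtype]
    have : Finset.univ.filter (fun p : Fin t × Fin t => p.1 ≠ a ∧ p.2 ≠ a ∧ p.1 ≠ p.2)
        = (Finset.univ.erase a).offDiag := by
      ext p
      simp [Finset.mem_offDiag]
    rw [this, Finset.offDiag_card, Finset.card_erase_of_mem (Finset.mem_univ a),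
      Finset.card_univ, Fintype.card_fin]
    have h2 : ∀ m : ℕ, m * m - m = m * (m - 1) := by
      intro m
      cases m with
      | zero => simp
      | succ n =>
        rw [Nat.succ_sub_one, show (n+1)*(n+1) = (n+1)*n + (n+1) by ring, Nat.add_sub_cancel]
    rw [h2, show t - 1 - 1 = t - 2 from by omega]
  have cB : Nat.card TB = (t-1) * (t-2) := by
    rw [Nat.card_eq_fintype_card, Fintype.card_subtype]
    have : Finset.univ.filter (fun p : Fin t × Fin t => p.1 ≠ a ∧ p.2 ≠ b1 ∧ p.2 ≠ b2)
        = (Finset.univ.erase a) ×ˢ ((Finset.univ.erase b1).erase b2) := by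
      ext p
      simp [Finset.mem_product, and_assoc]
      tauto
    rw [this, Finset.card_product, Finset.card_erase_of_mem (Finset.mem_univ a),
      Finset.card_erase_of_mem (Finset.mem_erase.mpr ⟨Ne.symm hb, Finset.mem_univ b2⟩),
      Finset.card_erase_of_mem (Finset.mem_univ b1), Finset.card_univ, Fintype.card_fin]
    rw [show t - 1 - 1 = t - 2 from by omega]
  rw [cA, cB]
  ring

lemma edge_form {e : Sym2 (Fin t ⊕ Fin t)} (he : e ∈ (BG t).edgeSet) :
    ∃ a b : Fin t, e = s(inl a, inr b) := by
  induction e using Sym2.ind with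
  | _ u v =>
    rw [SimpleGraph.mem_edgeSet] at he
    cases u with
    | inl a =>
      cases v with
      | inl a' => simp at he
      | inr b => exact ⟨a, b, rfl⟩
    | inr b =>
      cases v with
      | inl a => exact ⟨a, b, Sym2.eq_swap⟩
      | inr b' => simp at he

def sw (t : ℕ) : BG t ≃g BG t where
  toEquiv := Equiv.sumComm (Fin t) (Fin t)
  map_rel_iff' := by
    intro u v
    cases u <;> cases v <;> simp

def coeIsoMap (σ : BG t ≃g BG t) (H : (BG t).Subgraph) :
    H.coe ≃g (H.map σ.toHom).coe where
  toFun v := ⟨σ v, ⟨v, v.2, rfl⟩⟩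
  invFun w := ⟨σ.symm w, by
    obtain ⟨u, hu, hw⟩ := w.2
    have : σ.symm (w : Fin t ⊕ Fin t) = u := by
      rw [← hw]; exact σ.symm_apply_apply u
    rw [this]; exact hu⟩
  left_inv v := by
    apply Subtype.ext
    exact σ.symm_apply_apply _
  right_inv w := by
    apply Subtype.ext
    exact σ.apply_symm_apply _
  map_rel_iff' := by
    intro u v
    rw [SimpleGraph.Subgraph.coe_adj, SimpleGraph.Subgraph.coe_adj]
    constructor
    · rintro ⟨p, q, hpq, hp, hq⟩
      have hp' : p = ↑u := σ.injective hp
      have hq' : q = ↑v := σ.injective hq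
      rwa [hp', hq'] at hpq
    · intro h
      exact ⟨u, v, h, rfl, rfl⟩

lemma mem_edgeSet_map (σ : BG t ≃g BG t) (H : (BG t).Subgraph) (u v : Fin t ⊕ Fin t) :
    s(σ u, σ v) ∈ (H.map σ.toHom).edgeSet ↔ s(u, v) ∈ H.edgeSet := by
  rw [SimpleGraph.Subgraph.mem_edgeSet, SimpleGraph.Subgraph.mem_edgeSet]
  constructor
  · rintro ⟨p, q, hpq, hp, hq⟩
    have hp' : p = u := σ.injective hp
    have hq' : q = v := σ.injective hq
    rwa [hp', hq'] at hpq
  · intro h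
    exact ⟨u, v, h, rfl, rfl⟩

def mapEquiv (σ : BG t ≃g BG t) : (BG t).Subgraph ≃ (BG t).Subgraph where
  toFun H := H.map σ.toHom
  invFun H := H.map σ.symm.toHom
  left_inv H := by
    show (H.map σ.toHom).map σ.symm.toHom = H
    rw [← SimpleGraph.Subgraph.map_comp]
    have : (σ.symm.toHom.comp σ.toHom) = SimpleGraph.Hom.id := by
      ext v
      exact σ.symm_apply_apply v
    rw [this, SimpleGraph.Subgraph.map_id]
  right_inv H := by
    show (H.map σ.symm.toHom).map σ.toHom = H
    rw [← SimpleGraph.Subgraph.map_comp]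
    have : (σ.toHom.comp σ.symm.toHom) = SimpleGraph.Hom.id := by
      ext v
      exact σ.apply_symm_apply v
    rw [this, SimpleGraph.Subgraph.map_id]

theorem stmt_10 (t : ℕ) (ht : 3 ≤ t) (e1 e2 : Sym2 (Fin t ⊕ Fin t))
    (he1 : e1 ∈ (completeBipartiteGraph (Fin t) (Fin t)).edgeSet)
    (he2 : e2 ∈ (completeBipartiteGraph (Fin t) (Fin t)).edgeSet)
    (hne : e1 ≠ e2) (hadj : ∃ v : Fin t ⊕ Fin t, v ∈ e1 ∧ v ∈ e2) :
    Nat.card {H : (completeBipartiteGraph (Fin t) (Fin t)).Subgraph //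
      Nonempty (H.coe ≃g pathGraph 5) ∧ e1 ∈ H.edgeSet ∧ e2 ∈ H.edgeSet} =
      3 * (t - 1) * (t - 2) := by
  classical
  obtain ⟨a1, b1, rfl⟩ := edge_form he1
  obtain ⟨a2, b2, rfl⟩ := edge_form he2
  obtain ⟨v, hv1, hv2⟩ := hadj
  rw [Sym2.mem_iff] at hv1 hv2
  rcases hv1 with rfl | rfl <;> rcases hv2 with hv2 | hv2
  · -- shared left vertex
    have ha : a1 = a2 := by simpa using hv2
    subst ha
    have hbb : b1 ≠ b2 := by
      intro h; subst h; exact hne rfl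
    exact key ht a1 b1 b2 hbb
  · simp at hv2
  · simp at hv2
  · -- shared right vertex
    have hbb : b1 = b2 := by simpa using hv2
    subst hbb
    have haa : a1 ≠ a2 := by
      intro h; subst h; exact hne rfl
    have hkey := key ht b1 a1 a2 haa
    rw [← hkey]
    refine Nat.card_congr (Equiv.subtypeEquiv (mapEquiv (sw t)) ?_).symm
    intro K
    have hiso : Nonempty (K.coe ≃g pathGraph 5) ↔
        Nonempty ((K.map (sw t).toHom).coe ≃g pathGraph 5) := by
      constructor
      · rintro ⟨ψ⟩; exact ⟨(coeIsoMap (sw t) K).symm.trans ψ⟩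
      · rintro ⟨ψ⟩; exact ⟨(coeIsoMap (sw t) K).trans ψ⟩
    have he1' : s(inl a1, inr b1) ∈ (K.map (sw t).toHom).edgeSet ↔
        s(inl b1, inr a1) ∈ K.edgeSet := by
      have := mem_edgeSet_map (sw t) K (inr a1) (inl b1)
      simp only [show (sw t) (inr a1) = inl a1 from rfl,
        show (sw t) (inl b1) = inr b1 from rfl] at this
      rw [this, Sym2.eq_swap]
    have he2' : s(inl a2, inr b1) ∈ (K.map (sw t).toHom).edgeSet ↔
        s(inl b1, inr a2) ∈ K.edgeSet := by
      have := mem_edgeSet_map (sw t) K (inr a2) (inl b1)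
      simp only [show (sw t) (inr a2) = inl a2 from rfl,
        show (sw t) (inl b1) = inr b1 from rfl] at this
      rw [this, Sym2.eq_swap]
    simp only [mapEquiv, Equiv.coe_fn_mk]
    rw [hiso, he1', he2']
end

section
/- Let t ≥ 5 and suppose the edges of K_t are colored so that exactly one color class consists of three edges forming a triangle K_3, and every other color class is a single edge. Then the number of copies of P_5 in K_t containing at least two edges of the same color is exactly 9(t-3)(t-4). -/
set_option maxRecDepth 10000
set_option maxHeartbeats 1000000

open SimpleGraph Function

def consec (i j : Fin 5) : Prop := (i : ℕ) + 1 = (j : ℕ) ∨ (j : ℕ) + 1 = (i : ℕ)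

instance : DecidableRel consec := fun i j => by unfold consec; infer_instance

def PS {t : ℕ} (x : Fin 5 → Fin t) : (⊤ : SimpleGraph (Fin t)).Subgraph where
  verts := Set.range x
  Adj a b := a ≠ b ∧ ∃ i j : Fin 5, consec i j ∧ a = x i ∧ b = x j
  adj_sub h := h.1
  edge_vert h := by obtain ⟨-, i, j, -, rfl, -⟩ := h; exact ⟨i, rfl⟩
  symm := ⟨fun a b h => by
    obtain ⟨hne, i, j, hij, rfl, rfl⟩ := h
    exact ⟨hne.symm, j, i, hij.symm, rfl, rfl⟩⟩

lemma PS_adj_def {t : ℕ} (x : Fin 5 → Fin t) (a b : Fin t) :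
    (PS x).Adj a b ↔ a ≠ b ∧ ∃ i j : Fin 5, consec i j ∧ a = x i ∧ b = x j := Iff.rfl

lemma PS_verts {t : ℕ} (x : Fin 5 → Fin t) : (PS x).verts = Set.range x := rfl

lemma PS_adj {t : ℕ} {x : Fin 5 → Fin t} (hx : Injective x) {i j : Fin 5} :
    (PS x).Adj (x i) (x j) ↔ consec i j := by
  constructor
  · rintro ⟨hne, i', j', hij, hi, hj⟩
    rwa [hx hi, hx hj]
  · intro h
    refine ⟨fun he => ?_, i, j, h, rfl, rfl⟩
    have := hx he
    rcases h with h | h <;> omega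

lemma pg_adj {i j : Fin 5} : (pathGraph 5).Adj i j ↔ consec i j := pathGraph_adj

lemma consec_rev {i j : Fin 5} : consec i.rev j.rev ↔ consec i j := by
  revert i j; decide

lemma PS_rev {t : ℕ} (x : Fin 5 → Fin t) : PS (fun k => x k.rev) = PS x := by
  apply SimpleGraph.Subgraph.ext
  · ext a; constructor
    · rintro ⟨i, rfl⟩; exact ⟨i.rev, rfl⟩
    · rintro ⟨i, rfl⟩; exact ⟨i.rev, by simp⟩
  · ext a b
    constructor
    · rintro ⟨hne, i, j, hij, rfl, rfl⟩
      exact ⟨hne, i.rev, j.rev, consec_rev.mpr hij, rfl, rfl⟩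
    · rintro ⟨hne, i, j, hij, rfl, rfl⟩
      exact ⟨hne, i.rev, j.rev, by simpa using consec_rev.mpr hij, by simp, by simp⟩

lemma eq_vec_rev {t : ℕ} (x : Fin 5 → Fin t) :
    (fun k : Fin 5 => x k.rev) = ![x 4, x 3, x 2, x 1, x 0] := by
  funext k; fin_cases k <;> rfl

lemma PS_eq_rev {t : ℕ} (x : Fin 5 → Fin t) :
    PS x = PS ![x 4, x 3, x 2, x 1, x 0] := by
  rw [← PS_rev x, eq_vec_rev]

noncomputable def PS_iso {t : ℕ} {x : Fin 5 → Fin t} (hx : Injective x) :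
    pathGraph 5 ≃g (PS x).coe := by
  have hbij : Function.Bijective (fun i : Fin 5 => (⟨x i, ⟨i, rfl⟩⟩ : (PS x).verts)) := by
    constructor
    · intro i j h
      exact hx (congrArg Subtype.val h)
    · rintro ⟨a, i, rfl⟩
      exact ⟨i, rfl⟩
  exact ⟨Equiv.ofBijective _ hbij, by
    intro i j
    simp only [Equiv.ofBijective_apply, Subgraph.coe_adj]
    exact (PS_adj hx).trans pg_adj.symm⟩

lemma mem_iff {t : ℕ} (H : (⊤ : SimpleGraph (Fin t)).Subgraph) :
    Nonempty (H.coe ≃g pathGraph 5) ↔ ∃ x : Fin 5 → Fin t, Injective x ∧ H = PS x := by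
  constructor
  · rintro ⟨φ⟩
    set ψ := φ.symm with hψ
    refine ⟨fun i => (ψ i : Fin t), Subtype.val_injective.comp (RelIso.injective _), ?_⟩
    have key : ∀ a (ha : a ∈ H.verts), (ψ (φ ⟨a, ha⟩) : Fin t) = a := by
      intro a ha; rw [hψ, RelIso.symm_apply_apply]
    apply SimpleGraph.Subgraph.ext
    · ext a
      constructor
      · intro ha
        exact ⟨φ ⟨a, ha⟩, key a ha⟩
      · rintro ⟨i, rfl⟩
        exact (ψ i).2
    · ext a b
      constructor
      · intro hab
        have ha : a ∈ H.verts := H.edge_vert hab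
        have hb : b ∈ H.verts := H.edge_vert hab.symm
        have hadj : H.coe.Adj ⟨a, ha⟩ ⟨b, hb⟩ := hab
        have hpg : (pathGraph 5).Adj (φ ⟨a, ha⟩) (φ ⟨b, hb⟩) := φ.map_adj_iff.mpr hadj
        exact ⟨(⊤ : SimpleGraph (Fin t)).ne_of_adj (H.adj_sub hab), φ ⟨a, ha⟩, φ ⟨b, hb⟩,
          pg_adj.mp hpg, (key a ha).symm, (key b hb).symm⟩
      · rintro ⟨hne, i, j, hij, rfl, rfl⟩
        have : H.coe.Adj (ψ i) (ψ j) := by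
          rw [hψ]
          exact φ.symm.map_adj_iff.mpr (pg_adj.mpr hij)
        exact this
  · rintro ⟨x, hx, rfl⟩
    exact ⟨(PS_iso hx).symm⟩

lemma perm_consec (σ : Equiv.Perm (Fin 5))
    (h : ∀ i j, consec (σ i) (σ j) ↔ consec i j) :
    (∀ k, σ k = k) ∨ (∀ k, σ k = k.rev) := by
  revert h; revert σ; decide

lemma rigid {t : ℕ} {x y : Fin 5 → Fin t} (hx : Injective x) (hy : Injective y)
    (h : PS x = PS y) :
    (y 0 = x 0 ∧ y 1 = x 1 ∧ y 2 = x 2 ∧ y 3 = x 3 ∧ y 4 = x 4) ∨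
    (y 0 = x 4 ∧ y 1 = x 3 ∧ y 2 = x 2 ∧ y 3 = x 1 ∧ y 4 = x 0) := by
  have hv : Set.range y = Set.range x := by
    rw [← PS_verts, ← PS_verts, h]
  let σ : Equiv.Perm (Fin 5) :=
    ((Equiv.ofInjective y hy).trans (Equiv.setCongr hv)).trans (Equiv.ofInjective x hx).symm
  have hσ : ∀ k, x (σ k) = y k := by
    intro k
    show x ((Equiv.ofInjective x hx).symm (Equiv.setCongr hv (Equiv.ofInjective y hy k))) = y k
    rw [Equiv.apply_ofInjective_symm hx]
    rfl
  have hpres : ∀ i j, consec (σ i) (σ j) ↔ consec i j := by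
    intro i j
    rw [← PS_adj hx, hσ, hσ, h, PS_adj hy]
  rcases perm_consec σ hpres with hid | hrev
  · left
    refine ⟨?_, ?_, ?_, ?_, ?_⟩ <;>
      first
        | exact ((congrArg x (hid 0)).symm.trans (hσ 0)).symm
        | exact ((congrArg x (hid 1)).symm.trans (hσ 1)).symm
        | exact ((congrArg x (hid 2)).symm.trans (hσ 2)).symm
        | exact ((congrArg x (hid 3)).symm.trans (hσ 3)).symm
        | exact ((congrArg x (hid 4)).symm.trans (hσ 4)).symm
  · right
    refine ⟨?_, ?_, ?_, ?_, ?_⟩ <;>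
      first
        | exact ((congrArg x (hrev 0)).symm.trans (hσ 0)).symm
        | exact ((congrArg x (hrev 1)).symm.trans (hσ 1)).symm
        | exact ((congrArg x (hrev 2)).symm.trans (hσ 2)).symm
        | exact ((congrArg x (hrev 3)).symm.trans (hσ 3)).symm
        | exact ((congrArg x (hrev 4)).symm.trans (hσ 4)).symm

lemma inj5 {α : Type*} {x0 x1 x2 x3 x4 : α} (h01 : x0 ≠ x1) (h02 : x0 ≠ x2)
    (h03 : x0 ≠ x3) (h04 : x0 ≠ x4) (h12 : x1 ≠ x2) (h13 : x1 ≠ x3) (h14 : x1 ≠ x4)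
    (h23 : x2 ≠ x3) (h24 : x2 ≠ x4) (h34 : x3 ≠ x4) :
    Function.Injective ![x0, x1, x2, x3, x4] := by
  intro i j h
  fin_cases i <;> fin_cases j <;> simp_all

lemma center_case {t : ℕ} {x : Fin 5 → Fin t} (hx : Injective x) {p cc q : Fin t}
    (hpq : p ≠ q) (h1 : (PS x).Adj p cc) (h2 : (PS x).Adj cc q) :
    (p = x 0 ∧ cc = x 1 ∧ q = x 2) ∨ (q = x 0 ∧ cc = x 1 ∧ p = x 2) ∨
    (p = x 1 ∧ cc = x 2 ∧ q = x 3) ∨ (q = x 1 ∧ cc = x 2 ∧ p = x 3) ∨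
    (p = x 2 ∧ cc = x 3 ∧ q = x 4) ∨ (q = x 2 ∧ cc = x 3 ∧ p = x 4) := by
  obtain ⟨-, i, j, hij, hp, hc⟩ := (PS_adj_def x p cc).mp h1
  obtain ⟨-, j', k, hjk, hc', hq⟩ := (PS_adj_def x cc q).mp h2
  have hjj : j = j' := hx (hc ▸ hc')
  subst hjj
  have hik : i ≠ k := fun he => hpq (by rw [hp, hq, he])
  fin_cases i <;> fin_cases j <;> fin_cases k <;> simp_all [consec]

def fam {t : ℕ} (u v w a b : Fin t) (i : Fin 9) : Fin 5 → Fin t :=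
  ![![a,u,v,w,b], ![u,v,w,a,b], ![w,v,u,a,b],
    ![a,v,u,w,b], ![v,u,w,a,b], ![w,u,v,a,b],
    ![a,u,w,v,b], ![u,w,v,a,b], ![v,w,u,a,b]] i

@[simp] lemma vec9_five {α : Type*} (v0 v1 v2 v3 v4 v5 v6 v7 v8 : α) :
    ![v0,v1,v2,v3,v4,v5,v6,v7,v8] (5 : Fin 9) = v5 := rfl
@[simp] lemma vec9_six {α : Type*} (v0 v1 v2 v3 v4 v5 v6 v7 v8 : α) :
    ![v0,v1,v2,v3,v4,v5,v6,v7,v8] (6 : Fin 9) = v6 := rfl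
@[simp] lemma vec9_seven {α : Type*} (v0 v1 v2 v3 v4 v5 v6 v7 v8 : α) :
    ![v0,v1,v2,v3,v4,v5,v6,v7,v8] (7 : Fin 9) = v7 := rfl
@[simp] lemma vec9_eight {α : Type*} (v0 v1 v2 v3 v4 v5 v6 v7 v8 : α) :
    ![v0,v1,v2,v3,v4,v5,v6,v7,v8] (8 : Fin 9) = v8 := rfl

lemma fam_z {t : ℕ} (u v w a b : Fin t) : fam u v w a b 0 = ![a,u,v,w,b] := rfl
lemma fam_1 {t : ℕ} (u v w a b : Fin t) : fam u v w a b 1 = ![u,v,w,a,b] := rfl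
lemma fam_2 {t : ℕ} (u v w a b : Fin t) : fam u v w a b 2 = ![w,v,u,a,b] := rfl
lemma fam_3 {t : ℕ} (u v w a b : Fin t) : fam u v w a b 3 = ![a,v,u,w,b] := rfl
lemma fam_4 {t : ℕ} (u v w a b : Fin t) : fam u v w a b 4 = ![v,u,w,a,b] := rfl
lemma fam_5 {t : ℕ} (u v w a b : Fin t) : fam u v w a b 5 = ![w,u,v,a,b] := rfl
lemma fam_6 {t : ℕ} (u v w a b : Fin t) : fam u v w a b 6 = ![a,u,w,v,b] := rfl
lemma fam_7 {t : ℕ} (u v w a b : Fin t) : fam u v w a b 7 = ![u,w,v,a,b] := rfl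
lemma fam_8 {t : ℕ} (u v w a b : Fin t) : fam u v w a b 8 = ![v,w,u,a,b] := rfl

set_option maxHeartbeats 4000000 in
lemma fam_inj_main {t : ℕ} {u v w a b a' b' : Fin t} (i i' : Fin 9)
    (huv : u ≠ v) (huw : u ≠ w) (hvw : v ≠ w)
    (n1 : a ≠ u) (n2 : a ≠ v) (n3 : a ≠ w) (n4 : b ≠ u) (n5 : b ≠ v) (n6 : b ≠ w) (n7 : a ≠ b)
    (m1 : a' ≠ u) (m2 : a' ≠ v) (m3 : a' ≠ w) (m4 : b' ≠ u) (m5 : b' ≠ v) (m6 : b' ≠ w)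
    (m7 : a' ≠ b')
    (h2 : (fam u v w a' b' i' 0 = fam u v w a b i 0 ∧ fam u v w a' b' i' 1 = fam u v w a b i 1 ∧
           fam u v w a' b' i' 2 = fam u v w a b i 2 ∧ fam u v w a' b' i' 3 = fam u v w a b i 3 ∧
           fam u v w a' b' i' 4 = fam u v w a b i 4) ∨
          (fam u v w a' b' i' 0 = fam u v w a b i 4 ∧ fam u v w a' b' i' 1 = fam u v w a b i 3 ∧
           fam u v w a' b' i' 2 = fam u v w a b i 2 ∧ fam u v w a' b' i' 3 = fam u v w a b i 1 ∧
           fam u v w a' b' i' 4 = fam u v w a b i 0)) :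
    i = i' ∧ a = a' ∧ b = b' := by
  fin_cases i <;> fin_cases i' <;>
    (rcases h2 with ⟨e0, e1, e2, e3, e4⟩ | ⟨e0, e1, e2, e3, e4⟩ <;>
      simp only [Fin.reduceFinMk, Fin.isValue, fam_z, fam_1, fam_2, fam_3, fam_4, fam_5,
        fam_6, fam_7, fam_8,
        Matrix.cons_val_zero, Matrix.cons_val_one, Matrix.head_cons,
        Matrix.cons_val_two, Matrix.tail_cons, Matrix.cons_val_three,
        Matrix.cons_val_four] at e0 e1 e2 e3 e4 <;>
      refine ⟨?_, ?_, ?_⟩ <;> first | rfl | grind)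

theorem stmt_17 (t : ℕ) (ht : 5 ≤ t) (c : Sym2 (Fin t) → ℕ) (r : ℕ)
    (u v w : Fin t) (huv : u ≠ v) (huw : u ≠ w) (hvw : v ≠ w)
    (htriangle : {e ∈ (⊤ : SimpleGraph (Fin t)).edgeSet | c e = r} =
      ({s(u, v), s(v, w), s(u, w)} : Set (Sym2 (Fin t))))
    (hsingle : ∀ e ∈ (⊤ : SimpleGraph (Fin t)).edgeSet,
      ∀ f ∈ (⊤ : SimpleGraph (Fin t)).edgeSet, e ≠ f → c e = c f → c e = r) :
    Nat.card {H : (⊤ : SimpleGraph (Fin t)).Subgraph //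
      Nonempty (H.coe ≃g pathGraph 5) ∧
      ∃ e ∈ H.edgeSet, ∃ f ∈ H.edgeSet, e ≠ f ∧ c e = c f} = 9 * (t - 3) * (t - 4) := by
  classical
  set Bf : Finset (Fin t × Fin t) :=
    ((Finset.univ : Finset (Fin t)) \ {u, v, w}).offDiag with hBfdef
  have hBf_mem : ∀ a b : Fin t, (a, b) ∈ Bf ↔
      (a ≠ u ∧ a ≠ v ∧ a ≠ w ∧ b ≠ u ∧ b ≠ v ∧ b ≠ w ∧ a ≠ b) := by
    intro a b
    simp only [hBfdef, Finset.mem_offDiag, Finset.mem_sdiff, Finset.mem_univ, true_and,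
      Finset.mem_insert, Finset.mem_singleton, not_or]
    tauto
  -- colors of triangle edges
  have hcol : ∀ e ∈ ({s(u,v), s(v,w), s(u,w)} : Set (Sym2 (Fin t))), c e = r := by
    intro e he
    have : e ∈ {e ∈ (⊤ : SimpleGraph (Fin t)).edgeSet | c e = r} := htriangle ▸ he
    exact this.2
  have hne1 : s(u,v) ≠ s(v,w) := by simp [Sym2.eq_iff, huv, huw, hvw]
  have hne2 : s(u,v) ≠ s(u,w) := by simp [Sym2.eq_iff, huv, huw, hvw]
  have hne3 : s(v,w) ≠ s(u,w) := by
    simp [Sym2.eq_iff, Ne.symm huv, hvw]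
  have cond_iff : ∀ H : (⊤ : SimpleGraph (Fin t)).Subgraph,
      (∃ e ∈ H.edgeSet, ∃ f ∈ H.edgeSet, e ≠ f ∧ c e = c f) ↔
      ((s(u,v) ∈ H.edgeSet ∧ s(v,w) ∈ H.edgeSet) ∨
       (s(u,v) ∈ H.edgeSet ∧ s(u,w) ∈ H.edgeSet) ∨
       (s(v,w) ∈ H.edgeSet ∧ s(u,w) ∈ H.edgeSet)) := by
    intro H
    constructor
    · rintro ⟨e, he, f, hf, hef, hc⟩
      have her : c e = r := hsingle e (H.edgeSet_subset he) f (H.edgeSet_subset hf) hef hc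
      have hfr : c f = r := hsingle f (H.edgeSet_subset hf) e (H.edgeSet_subset he) hef.symm hc.symm
      have he3 : e ∈ ({s(u,v), s(v,w), s(u,w)} : Set (Sym2 (Fin t))) :=
        htriangle ▸ (⟨H.edgeSet_subset he, her⟩ : _ ∧ _)
      have hf3 : f ∈ ({s(u,v), s(v,w), s(u,w)} : Set (Sym2 (Fin t))) :=
        htriangle ▸ (⟨H.edgeSet_subset hf, hfr⟩ : _ ∧ _)
      simp only [Set.mem_insert_iff, Set.mem_singleton_iff] at he3 hf3
      rcases he3 with rfl | rfl | rfl <;> rcases hf3 with rfl | rfl | rfl <;> tauto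
    · have cuv : c s(u,v) = r := hcol _ (by simp)
      have cvw : c s(v,w) = r := hcol _ (by simp)
      have cuw : c s(u,w) = r := hcol _ (by simp)
      rintro (⟨m1, m2⟩ | ⟨m1, m2⟩ | ⟨m1, m2⟩)
      · exact ⟨_, m1, _, m2, hne1, cuv.trans cvw.symm⟩
      · exact ⟨_, m1, _, m2, hne2, cuv.trans cuw.symm⟩
      · exact ⟨_, m1, _, m2, hne3, cvw.trans cuw.symm⟩
  -- injectivity of each family sequence
  have famInj : ∀ (i : Fin 9) (a b : Fin t), (a, b) ∈ Bf → Injective (fam u v w a b i) := by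
    intro i a b hab
    rw [hBf_mem] at hab
    obtain ⟨n1, n2, n3, n4, n5, n6, n7⟩ := hab
    fin_cases i <;>
      exact inj5 (by first | assumption | exact Ne.symm (by assumption))
        (by first | assumption | exact Ne.symm (by assumption))
        (by first | assumption | exact Ne.symm (by assumption))
        (by first | assumption | exact Ne.symm (by assumption))
        (by first | assumption | exact Ne.symm (by assumption))
        (by first | assumption | exact Ne.symm (by assumption))
        (by first | assumption | exact Ne.symm (by assumption))
        (by first | assumption | exact Ne.symm (by assumption))
        (by first | assumption | exact Ne.symm (by assumption))
        (by first | assumption | exact Ne.symm (by assumption))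
  -- each family member satisfies the property
  have hmem : ∀ (i : Fin 9) (a b : Fin t) (hab : (a, b) ∈ Bf),
      Nonempty ((PS (fam u v w a b i)).coe ≃g pathGraph 5) ∧
      ∃ e ∈ (PS (fam u v w a b i)).edgeSet, ∃ f ∈ (PS (fam u v w a b i)).edgeSet,
        e ≠ f ∧ c e = c f := by
    intro i a b hab
    refine ⟨(mem_iff _).mpr ⟨_, famInj i a b hab, rfl⟩, (cond_iff _).mpr ?_⟩
    fin_cases i
    · exact Or.inl ⟨Subgraph.mem_edgeSet.mpr ⟨huv, 1, 2, by decide, rfl, rfl⟩,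
        Subgraph.mem_edgeSet.mpr ⟨hvw, 2, 3, by decide, rfl, rfl⟩⟩
    · exact Or.inl ⟨Subgraph.mem_edgeSet.mpr ⟨huv, 0, 1, by decide, rfl, rfl⟩,
        Subgraph.mem_edgeSet.mpr ⟨hvw, 1, 2, by decide, rfl, rfl⟩⟩
    · exact Or.inl ⟨Subgraph.mem_edgeSet.mpr ⟨huv, 2, 1, by decide, rfl, rfl⟩,
        Subgraph.mem_edgeSet.mpr ⟨hvw, 1, 0, by decide, rfl, rfl⟩⟩
    · exact Or.inr (Or.inl ⟨Subgraph.mem_edgeSet.mpr ⟨huv, 2, 1, by decide, rfl, rfl⟩,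
        Subgraph.mem_edgeSet.mpr ⟨huw, 2, 3, by decide, rfl, rfl⟩⟩)
    · exact Or.inr (Or.inl ⟨Subgraph.mem_edgeSet.mpr ⟨huv, 1, 0, by decide, rfl, rfl⟩,
        Subgraph.mem_edgeSet.mpr ⟨huw, 1, 2, by decide, rfl, rfl⟩⟩)
    · exact Or.inr (Or.inl ⟨Subgraph.mem_edgeSet.mpr ⟨huv, 1, 2, by decide, rfl, rfl⟩,
        Subgraph.mem_edgeSet.mpr ⟨huw, 1, 0, by decide, rfl, rfl⟩⟩)
    · exact Or.inr (Or.inr ⟨Subgraph.mem_edgeSet.mpr ⟨hvw, 3, 2, by decide, rfl, rfl⟩,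
        Subgraph.mem_edgeSet.mpr ⟨huw, 1, 2, by decide, rfl, rfl⟩⟩)
    · exact Or.inr (Or.inr ⟨Subgraph.mem_edgeSet.mpr ⟨hvw, 2, 1, by decide, rfl, rfl⟩,
        Subgraph.mem_edgeSet.mpr ⟨huw, 0, 1, by decide, rfl, rfl⟩⟩)
    · exact Or.inr (Or.inr ⟨Subgraph.mem_edgeSet.mpr ⟨hvw, 0, 1, by decide, rfl, rfl⟩,
        Subgraph.mem_edgeSet.mpr ⟨huw, 2, 1, by decide, rfl, rfl⟩⟩)
  have key : Function.Bijective
      (fun z : Fin 9 × {p : Fin t × Fin t // p ∈ Bf} =>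
        (⟨PS (fam u v w z.2.1.1 z.2.1.2 z.1), hmem z.1 z.2.1.1 z.2.1.2 z.2.2⟩ :
          {H : (⊤ : SimpleGraph (Fin t)).Subgraph //
            Nonempty (H.coe ≃g pathGraph 5) ∧
            ∃ e ∈ H.edgeSet, ∃ f ∈ H.edgeSet, e ≠ f ∧ c e = c f})) := by
    constructor
    · rintro ⟨i, ⟨⟨a, b⟩, hab⟩⟩ ⟨i', ⟨⟨a', b'⟩, hab'⟩⟩ hFz
      have hPS : PS (fam u v w a b i) = PS (fam u v w a' b' i') := congrArg Subtype.val hFz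
      have h2 := rigid (famInj i a b hab) (famInj i' a' b' hab') hPS
      obtain ⟨n1, n2, n3, n4, n5, n6, n7⟩ := (hBf_mem a b).mp hab
      obtain ⟨m1, m2, m3, m4, m5, m6, m7⟩ := (hBf_mem a' b').mp hab'
      obtain ⟨hii, haa, hbb⟩ := fam_inj_main i i' huv huw hvw n1 n2 n3 n4 n5 n6 n7
        m1 m2 m3 m4 m5 m6 m7 h2
      subst hii; subst haa; subst hbb
      rfl
    · rintro ⟨H, hiso, hcond⟩
      obtain ⟨x, hx, rfl⟩ := (mem_iff H).mp hiso
      rw [cond_iff] at hcond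
      have hxne : ∀ i j : Fin 5, i ≠ j → x i ≠ x j := fun i j hij he => hij (hx he)
      have mkmem : ∀ (j1 j2 i1 i2 i3 : Fin 5), u = x i1 → v = x i2 → w = x i3 →
          j1 ≠ i1 → j1 ≠ i2 → j1 ≠ i3 → j2 ≠ i1 → j2 ≠ i2 → j2 ≠ i3 → j1 ≠ j2 →
          (x j1, x j2) ∈ Bf := by
        intro j1 j2 i1 i2 i3 hu hv hw d1 d2 d3 d4 d5 d6 d7
        rw [hBf_mem]
        exact ⟨fun hc => hxne _ _ d1 (hc.trans hu), fun hc => hxne _ _ d2 (hc.trans hv),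
          fun hc => hxne _ _ d3 (hc.trans hw), fun hc => hxne _ _ d4 (hc.trans hu),
          fun hc => hxne _ _ d5 (hc.trans hv), fun hc => hxne _ _ d6 (hc.trans hw),
          hxne _ _ d7⟩
      rcases hcond with ⟨h1, h2⟩ | ⟨h1, h2⟩ | ⟨h1, h2⟩
      · -- center v
        have a1 : (PS x).Adj u v := Subgraph.mem_edgeSet.mp h1
        have a2 : (PS x).Adj v w := Subgraph.mem_edgeSet.mp h2
        rcases center_case hx huw a1 a2 with
          ⟨e1, e2, e3⟩ | ⟨e1, e2, e3⟩ | ⟨e1, e2, e3⟩ | ⟨e1, e2, e3⟩ | ⟨e1, e2, e3⟩ | ⟨e1, e2, e3⟩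
        · refine ⟨⟨1, ⟨(x 3, x 4),
            mkmem 3 4 0 1 2 e1 e2 e3 (by decide) (by decide) (by decide) (by decide)
              (by decide) (by decide) (by decide)⟩⟩, Subtype.ext ?_⟩
          show PS (fam u v w (x 3) (x 4) 1) = PS x
          exact congrArg PS (by funext k; fin_cases k <;> simp only [Fin.reduceFinMk, Fin.isValue, fam_z, fam_1, fam_2, fam_3, fam_4, fam_5, fam_6, fam_7, fam_8, Matrix.cons_val_zero, Matrix.cons_val_one, Matrix.head_cons, Matrix.cons_val_two, Matrix.tail_cons, Matrix.cons_val_three, Matrix.cons_val_four] <;> first | rfl | assumption)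
        · refine ⟨⟨2, ⟨(x 3, x 4),
            mkmem 3 4 2 1 0 e3 e2 e1 (by decide) (by decide) (by decide) (by decide)
              (by decide) (by decide) (by decide)⟩⟩, Subtype.ext ?_⟩
          show PS (fam u v w (x 3) (x 4) 2) = PS x
          exact congrArg PS (by funext k; fin_cases k <;> simp only [Fin.reduceFinMk, Fin.isValue, fam_z, fam_1, fam_2, fam_3, fam_4, fam_5, fam_6, fam_7, fam_8, Matrix.cons_val_zero, Matrix.cons_val_one, Matrix.head_cons, Matrix.cons_val_two, Matrix.tail_cons, Matrix.cons_val_three, Matrix.cons_val_four] <;> first | rfl | assumption)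
        · refine ⟨⟨0, ⟨(x 0, x 4),
            mkmem 0 4 1 2 3 e1 e2 e3 (by decide) (by decide) (by decide) (by decide)
              (by decide) (by decide) (by decide)⟩⟩, Subtype.ext ?_⟩
          show PS (fam u v w (x 0) (x 4) 0) = PS x
          exact congrArg PS (by funext k; fin_cases k <;> simp only [Fin.reduceFinMk, Fin.isValue, fam_z, fam_1, fam_2, fam_3, fam_4, fam_5, fam_6, fam_7, fam_8, Matrix.cons_val_zero, Matrix.cons_val_one, Matrix.head_cons, Matrix.cons_val_two, Matrix.tail_cons, Matrix.cons_val_three, Matrix.cons_val_four] <;> first | rfl | assumption)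
        · refine ⟨⟨0, ⟨(x 4, x 0),
            mkmem 4 0 3 2 1 e3 e2 e1 (by decide) (by decide) (by decide) (by decide)
              (by decide) (by decide) (by decide)⟩⟩, Subtype.ext ?_⟩
          show PS (fam u v w (x 4) (x 0) 0) = PS x
          rw [PS_eq_rev x]
          exact congrArg PS (by funext k; fin_cases k <;> simp only [Fin.reduceFinMk, Fin.isValue, fam_z, fam_1, fam_2, fam_3, fam_4, fam_5, fam_6, fam_7, fam_8, Matrix.cons_val_zero, Matrix.cons_val_one, Matrix.head_cons, Matrix.cons_val_two, Matrix.tail_cons, Matrix.cons_val_three, Matrix.cons_val_four] <;> first | rfl | assumption)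
        · refine ⟨⟨2, ⟨(x 1, x 0),
            mkmem 1 0 2 3 4 e1 e2 e3 (by decide) (by decide) (by decide) (by decide)
              (by decide) (by decide) (by decide)⟩⟩, Subtype.ext ?_⟩
          show PS (fam u v w (x 1) (x 0) 2) = PS x
          rw [PS_eq_rev x]
          exact congrArg PS (by funext k; fin_cases k <;> simp only [Fin.reduceFinMk, Fin.isValue, fam_z, fam_1, fam_2, fam_3, fam_4, fam_5, fam_6, fam_7, fam_8, Matrix.cons_val_zero, Matrix.cons_val_one, Matrix.head_cons, Matrix.cons_val_two, Matrix.tail_cons, Matrix.cons_val_three, Matrix.cons_val_four] <;> first | rfl | assumption)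
        · refine ⟨⟨1, ⟨(x 1, x 0),
            mkmem 1 0 4 3 2 e3 e2 e1 (by decide) (by decide) (by decide) (by decide)
              (by decide) (by decide) (by decide)⟩⟩, Subtype.ext ?_⟩
          show PS (fam u v w (x 1) (x 0) 1) = PS x
          rw [PS_eq_rev x]
          exact congrArg PS (by funext k; fin_cases k <;> simp only [Fin.reduceFinMk, Fin.isValue, fam_z, fam_1, fam_2, fam_3, fam_4, fam_5, fam_6, fam_7, fam_8, Matrix.cons_val_zero, Matrix.cons_val_one, Matrix.head_cons, Matrix.cons_val_two, Matrix.tail_cons, Matrix.cons_val_three, Matrix.cons_val_four] <;> first | rfl | assumption)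
      · -- center u
        have a1 : (PS x).Adj v u := (Subgraph.mem_edgeSet.mp h1).symm
        have a2 : (PS x).Adj u w := Subgraph.mem_edgeSet.mp h2
        rcases center_case hx hvw a1 a2 with
          ⟨e1, e2, e3⟩ | ⟨e1, e2, e3⟩ | ⟨e1, e2, e3⟩ | ⟨e1, e2, e3⟩ | ⟨e1, e2, e3⟩ | ⟨e1, e2, e3⟩
        · refine ⟨⟨4, ⟨(x 3, x 4),
            mkmem 3 4 1 0 2 e2 e1 e3 (by decide) (by decide) (by decide) (by decide)
              (by decide) (by decide) (by decide)⟩⟩, Subtype.ext ?_⟩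
          show PS (fam u v w (x 3) (x 4) 4) = PS x
          exact congrArg PS (by funext k; fin_cases k <;> simp only [Fin.reduceFinMk, Fin.isValue, fam_z, fam_1, fam_2, fam_3, fam_4, fam_5, fam_6, fam_7, fam_8, Matrix.cons_val_zero, Matrix.cons_val_one, Matrix.head_cons, Matrix.cons_val_two, Matrix.tail_cons, Matrix.cons_val_three, Matrix.cons_val_four] <;> first | rfl | assumption)
        · refine ⟨⟨5, ⟨(x 3, x 4),
            mkmem 3 4 1 2 0 e2 e3 e1 (by decide) (by decide) (by decide) (by decide)
              (by decide) (by decide) (by decide)⟩⟩, Subtype.ext ?_⟩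
          show PS (fam u v w (x 3) (x 4) 5) = PS x
          exact congrArg PS (by funext k; fin_cases k <;> simp only [Fin.reduceFinMk, Fin.isValue, fam_z, fam_1, fam_2, fam_3, fam_4, fam_5, fam_6, fam_7, fam_8, Matrix.cons_val_zero, Matrix.cons_val_one, Matrix.head_cons, Matrix.cons_val_two, Matrix.tail_cons, Matrix.cons_val_three, Matrix.cons_val_four] <;> first | rfl | assumption)
        · refine ⟨⟨3, ⟨(x 0, x 4),
            mkmem 0 4 2 1 3 e2 e1 e3 (by decide) (by decide) (by decide) (by decide)
              (by decide) (by decide) (by decide)⟩⟩, Subtype.ext ?_⟩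
          show PS (fam u v w (x 0) (x 4) 3) = PS x
          exact congrArg PS (by funext k; fin_cases k <;> simp only [Fin.reduceFinMk, Fin.isValue, fam_z, fam_1, fam_2, fam_3, fam_4, fam_5, fam_6, fam_7, fam_8, Matrix.cons_val_zero, Matrix.cons_val_one, Matrix.head_cons, Matrix.cons_val_two, Matrix.tail_cons, Matrix.cons_val_three, Matrix.cons_val_four] <;> first | rfl | assumption)
        · refine ⟨⟨3, ⟨(x 4, x 0),
            mkmem 4 0 2 3 1 e2 e3 e1 (by decide) (by decide) (by decide) (by decide)
              (by decide) (by decide) (by decide)⟩⟩, Subtype.ext ?_⟩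
          show PS (fam u v w (x 4) (x 0) 3) = PS x
          rw [PS_eq_rev x]
          exact congrArg PS (by funext k; fin_cases k <;> simp only [Fin.reduceFinMk, Fin.isValue, fam_z, fam_1, fam_2, fam_3, fam_4, fam_5, fam_6, fam_7, fam_8, Matrix.cons_val_zero, Matrix.cons_val_one, Matrix.head_cons, Matrix.cons_val_two, Matrix.tail_cons, Matrix.cons_val_three, Matrix.cons_val_four] <;> first | rfl | assumption)
        · refine ⟨⟨5, ⟨(x 1, x 0),
            mkmem 1 0 3 2 4 e2 e1 e3 (by decide) (by decide) (by decide) (by decide)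
              (by decide) (by decide) (by decide)⟩⟩, Subtype.ext ?_⟩
          show PS (fam u v w (x 1) (x 0) 5) = PS x
          rw [PS_eq_rev x]
          exact congrArg PS (by funext k; fin_cases k <;> simp only [Fin.reduceFinMk, Fin.isValue, fam_z, fam_1, fam_2, fam_3, fam_4, fam_5, fam_6, fam_7, fam_8, Matrix.cons_val_zero, Matrix.cons_val_one, Matrix.head_cons, Matrix.cons_val_two, Matrix.tail_cons, Matrix.cons_val_three, Matrix.cons_val_four] <;> first | rfl | assumption)
        · refine ⟨⟨4, ⟨(x 1, x 0),
            mkmem 1 0 3 4 2 e2 e3 e1 (by decide) (by decide) (by decide) (by decide)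
              (by decide) (by decide) (by decide)⟩⟩, Subtype.ext ?_⟩
          show PS (fam u v w (x 1) (x 0) 4) = PS x
          rw [PS_eq_rev x]
          exact congrArg PS (by funext k; fin_cases k <;> simp only [Fin.reduceFinMk, Fin.isValue, fam_z, fam_1, fam_2, fam_3, fam_4, fam_5, fam_6, fam_7, fam_8, Matrix.cons_val_zero, Matrix.cons_val_one, Matrix.head_cons, Matrix.cons_val_two, Matrix.tail_cons, Matrix.cons_val_three, Matrix.cons_val_four] <;> first | rfl | assumption)
      · -- center w
        have a1 : (PS x).Adj u w := Subgraph.mem_edgeSet.mp h2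
        have a2 : (PS x).Adj w v := (Subgraph.mem_edgeSet.mp h1).symm
        rcases center_case hx huv a1 a2 with
          ⟨e1, e2, e3⟩ | ⟨e1, e2, e3⟩ | ⟨e1, e2, e3⟩ | ⟨e1, e2, e3⟩ | ⟨e1, e2, e3⟩ | ⟨e1, e2, e3⟩
        · refine ⟨⟨7, ⟨(x 3, x 4),
            mkmem 3 4 0 2 1 e1 e3 e2 (by decide) (by decide) (by decide) (by decide)
              (by decide) (by decide) (by decide)⟩⟩, Subtype.ext ?_⟩
          show PS (fam u v w (x 3) (x 4) 7) = PS x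
          exact congrArg PS (by funext k; fin_cases k <;> simp only [Fin.reduceFinMk, Fin.isValue, fam_z, fam_1, fam_2, fam_3, fam_4, fam_5, fam_6, fam_7, fam_8, Matrix.cons_val_zero, Matrix.cons_val_one, Matrix.head_cons, Matrix.cons_val_two, Matrix.tail_cons, Matrix.cons_val_three, Matrix.cons_val_four] <;> first | rfl | assumption)
        · refine ⟨⟨8, ⟨(x 3, x 4),
            mkmem 3 4 2 0 1 e3 e1 e2 (by decide) (by decide) (by decide) (by decide)
              (by decide) (by decide) (by decide)⟩⟩, Subtype.ext ?_⟩
          show PS (fam u v w (x 3) (x 4) 8) = PS x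
          exact congrArg PS (by funext k; fin_cases k <;> simp only [Fin.reduceFinMk, Fin.isValue, fam_z, fam_1, fam_2, fam_3, fam_4, fam_5, fam_6, fam_7, fam_8, Matrix.cons_val_zero, Matrix.cons_val_one, Matrix.head_cons, Matrix.cons_val_two, Matrix.tail_cons, Matrix.cons_val_three, Matrix.cons_val_four] <;> first | rfl | assumption)
        · refine ⟨⟨6, ⟨(x 0, x 4),
            mkmem 0 4 1 3 2 e1 e3 e2 (by decide) (by decide) (by decide) (by decide)
              (by decide) (by decide) (by decide)⟩⟩, Subtype.ext ?_⟩
          show PS (fam u v w (x 0) (x 4) 6) = PS x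
          exact congrArg PS (by funext k; fin_cases k <;> simp only [Fin.reduceFinMk, Fin.isValue, fam_z, fam_1, fam_2, fam_3, fam_4, fam_5, fam_6, fam_7, fam_8, Matrix.cons_val_zero, Matrix.cons_val_one, Matrix.head_cons, Matrix.cons_val_two, Matrix.tail_cons, Matrix.cons_val_three, Matrix.cons_val_four] <;> first | rfl | assumption)
        · refine ⟨⟨6, ⟨(x 4, x 0),
            mkmem 4 0 3 1 2 e3 e1 e2 (by decide) (by decide) (by decide) (by decide)
              (by decide) (by decide) (by decide)⟩⟩, Subtype.ext ?_⟩
          show PS (fam u v w (x 4) (x 0) 6) = PS x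
          rw [PS_eq_rev x]
          exact congrArg PS (by funext k; fin_cases k <;> simp only [Fin.reduceFinMk, Fin.isValue, fam_z, fam_1, fam_2, fam_3, fam_4, fam_5, fam_6, fam_7, fam_8, Matrix.cons_val_zero, Matrix.cons_val_one, Matrix.head_cons, Matrix.cons_val_two, Matrix.tail_cons, Matrix.cons_val_three, Matrix.cons_val_four] <;> first | rfl | assumption)
        · refine ⟨⟨8, ⟨(x 1, x 0),
            mkmem 1 0 2 4 3 e1 e3 e2 (by decide) (by decide) (by decide) (by decide)
              (by decide) (by decide) (by decide)⟩⟩, Subtype.ext ?_⟩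
          show PS (fam u v w (x 1) (x 0) 8) = PS x
          rw [PS_eq_rev x]
          exact congrArg PS (by funext k; fin_cases k <;> simp only [Fin.reduceFinMk, Fin.isValue, fam_z, fam_1, fam_2, fam_3, fam_4, fam_5, fam_6, fam_7, fam_8, Matrix.cons_val_zero, Matrix.cons_val_one, Matrix.head_cons, Matrix.cons_val_two, Matrix.tail_cons, Matrix.cons_val_three, Matrix.cons_val_four] <;> first | rfl | assumption)
        · refine ⟨⟨7, ⟨(x 1, x 0),
            mkmem 1 0 4 2 3 e3 e1 e2 (by decide) (by decide) (by decide) (by decide)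
              (by decide) (by decide) (by decide)⟩⟩, Subtype.ext ?_⟩
          show PS (fam u v w (x 1) (x 0) 7) = PS x
          rw [PS_eq_rev x]
          exact congrArg PS (by funext k; fin_cases k <;> simp only [Fin.reduceFinMk, Fin.isValue, fam_z, fam_1, fam_2, fam_3, fam_4, fam_5, fam_6, fam_7, fam_8, Matrix.cons_val_zero, Matrix.cons_val_one, Matrix.head_cons, Matrix.cons_val_two, Matrix.tail_cons, Matrix.cons_val_three, Matrix.cons_val_four] <;> first | rfl | assumption)
  -- counting
  rw [Nat.card_congr (Equiv.ofBijective _ key).symm]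
  rw [Nat.card_eq_fintype_card, Fintype.card_prod, Fintype.card_fin, Fintype.card_coe]
  have hscard : ((Finset.univ : Finset (Fin t)) \ {u, v, w}).card = t - 3 := by
    rw [Finset.card_sdiff_of_subset (Finset.subset_univ _), Finset.card_univ, Fintype.card_fin]
    have : ({u, v, w} : Finset (Fin t)).card = 3 := by
      rw [Finset.card_insert_of_notMem (by simp [huv, huw]),
        Finset.card_insert_of_notMem (by simp [hvw]), Finset.card_singleton]
    rw [this]
  rw [hBfdef, Finset.offDiag_card, hscard]
  have h43 : t - 4 = (t - 3) - 1 := by omega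
  rw [h43]
  rcases Nat.exists_eq_add_of_le (show 2 ≤ t - 3 by omega) with ⟨m, hm⟩
  rw [hm]
  rw [show 2 + m = m + 1 + 1 by omega]
  rw [Nat.mul_succ, Nat.add_sub_cancel, Nat.succ_sub_one, Nat.mul_assoc]
end

section
/- Let t ≥ 5 and suppose the edges of K_t are colored so that exactly one color class consists of three edges forming a star K_{1,3}, and every other color class is a single edge. Then the number of copies of P_5 in K_t containing at least two edges of the same color is exactly 9(t-3)(t-4). -/
open SimpleGraph

variable {n : ℕ}

lemma idx5 : ∀ i j : Fin 5, ((i:ℕ)+1 = j ∨ (j:ℕ)+1 = i) ↔ ∃ k : Fin 4,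
    (i = k.castSucc ∧ j = k.succ) ∨ (j = k.castSucc ∧ i = k.succ) := by decide

/-- The path subgraph of the complete graph determined by a vertex sequence. -/
def pSub (q : Fin 5 → Fin n) : (⊤ : SimpleGraph (Fin n)).Subgraph where
  verts := Set.range q
  Adj x y := x ≠ y ∧ ∃ k : Fin 4,
    (x = q k.castSucc ∧ y = q k.succ) ∨ (y = q k.castSucc ∧ x = q k.succ)
  adj_sub h := h.1
  edge_vert h := by
    obtain ⟨-, k, hk | hk⟩ := h
    · exact ⟨k.castSucc, hk.1.symm⟩
    · exact ⟨k.succ, hk.2.symm⟩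
  symm := ⟨fun x y h => by
    obtain ⟨hne, k, hk | hk⟩ := h
    · exact ⟨hne.symm, k, Or.inr hk⟩
    · exact ⟨hne.symm, k, Or.inl hk⟩⟩

lemma pSub_adj (q : Fin 5 → Fin n) (x y : Fin n) :
    (pSub q).Adj x y ↔ x ≠ y ∧ ∃ k : Fin 4,
      (x = q k.castSucc ∧ y = q k.succ) ∨ (y = q k.castSucc ∧ x = q k.succ) := Iff.rfl

lemma pSub_verts (q : Fin 5 → Fin n) : (pSub q).verts = Set.range q := rfl

lemma pSub_adj_of_inj {q : Fin 5 → Fin n} (hq : Function.Injective q) (i j : Fin 5) :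
    (pSub q).Adj (q i) (q j) ↔ (pathGraph 5).Adj i j := by
  rw [pSub_adj, pathGraph_adj, idx5]
  simp only [hq.eq_iff, hq.ne_iff]
  constructor
  · exact fun h => h.2
  · intro h
    refine ⟨?_, h⟩
    rintro rfl
    obtain ⟨k, ⟨h1, h2⟩ | ⟨h1, h2⟩⟩ := h <;> (subst h1; exact absurd h2 (by simp [Fin.ext_iff]))

noncomputable def pSub_iso {q : Fin 5 → Fin n} (hq : Function.Injective q) :
    (pSub q).coe ≃g pathGraph 5 := by
  refine ⟨(Equiv.ofInjective q hq).symm, ?_⟩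
  intro x y
  rw [Subgraph.coe_adj]
  have hx : q ((Equiv.ofInjective q hq).symm x) = (x : Fin n) :=
    congrArg Subtype.val (Equiv.apply_symm_apply (Equiv.ofInjective q hq) x)
  have hy : q ((Equiv.ofInjective q hq).symm y) = (y : Fin n) :=
    congrArg Subtype.val (Equiv.apply_symm_apply (Equiv.ofInjective q hq) y)
  rw [← hx, ← hy]
  exact (pSub_adj_of_inj hq _ _).symm

lemma pSub_edge {q : Fin 5 → Fin n} (e : Sym2 (Fin n)) :
    e ∈ (pSub q).edgeSet ↔ ∃ k : Fin 4, e = s(q k.castSucc, q k.succ) ∧ q k.castSucc ≠ q k.succ := by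
  induction e using Sym2.ind with
  | _ x y =>
    rw [Subgraph.mem_edgeSet, pSub_adj]
    constructor
    · rintro ⟨hne, k, ⟨rfl, rfl⟩ | ⟨rfl, rfl⟩⟩
      · exact ⟨k, rfl, hne⟩
      · exact ⟨k, Sym2.eq_swap, hne.symm⟩
    · rintro ⟨k, he, hne⟩
      rw [Sym2.eq_iff] at he
      obtain ⟨rfl, rfl⟩ | ⟨rfl, rfl⟩ := he
      · exact ⟨hne, k, Or.inl ⟨rfl, rfl⟩⟩
      · exact ⟨hne.symm, k, Or.inr ⟨rfl, rfl⟩⟩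

lemma pSub_rev (q : Fin 5 → Fin n) : pSub (q ∘ Fin.rev) = pSub q := by
  apply Subgraph.ext
  · simp [pSub_verts, Set.range_comp, Set.range_eq_univ.2 Fin.rev_surjective]
  · ext x y
    rw [pSub_adj, pSub_adj]
    refine and_congr_right fun _ => ⟨?_, ?_⟩
    · rintro ⟨k, ⟨h1, h2⟩ | ⟨h1, h2⟩⟩
      · exact ⟨k.rev, Or.inr ⟨by simpa [Fin.rev_succ] using h2, by simpa [Fin.rev_castSucc] using h1⟩⟩
      · exact ⟨k.rev, Or.inl ⟨by simpa [Fin.rev_succ] using h2, by simpa [Fin.rev_castSucc] using h1⟩⟩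
    · rintro ⟨k, ⟨h1, h2⟩ | ⟨h1, h2⟩⟩
      · exact ⟨k.rev, Or.inr ⟨by simp [Function.comp, Fin.rev_castSucc, h2], by simp [Function.comp, Fin.rev_succ, h1]⟩⟩
      · exact ⟨k.rev, Or.inl ⟨by simp [Function.comp, Fin.rev_castSucc, h2], by simp [Function.comp, Fin.rev_succ, h1]⟩⟩

lemma exists_pSub {H : (⊤ : SimpleGraph (Fin n)).Subgraph} (φ : H.coe ≃g pathGraph 5) :
    ∃ q : Fin 5 → Fin n, Function.Injective q ∧ H = pSub q := by
  refine ⟨fun i => ↑(φ.symm i), fun i j h => φ.symm.injective (Subtype.val_injective h), ?_⟩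
  set q : Fin 5 → Fin n := fun i => ↑(φ.symm i) with hqdef
  have hq : Function.Injective q := fun i j h => φ.symm.injective (Subtype.val_injective h)
  have hmem : ∀ i, q i ∈ H.verts := fun i => (φ.symm i).2
  have hv : H.verts = Set.range q := by
    ext x; constructor
    · intro hx; exact ⟨φ ⟨x, hx⟩, by simp [hqdef]⟩
    · rintro ⟨i, rfl⟩; exact hmem i
  have hadj : ∀ i j, H.Adj (q i) (q j) ↔ (pathGraph 5).Adj i j := by
    intro i j
    have := φ.symm.map_adj_iff (v := i) (w := j)
    rw [Subgraph.coe_adj] at this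
    exact this
  refine Subgraph.ext hv ?_
  ext x y
  constructor
  · intro h
    have hx := H.edge_vert h
    have hy := H.edge_vert h.symm
    rw [hv] at hx hy
    obtain ⟨i, rfl⟩ := hx; obtain ⟨j, rfl⟩ := hy
    exact (pSub_adj_of_inj hq i j).2 ((hadj i j).1 h)
  · intro h
    obtain ⟨i, rfl⟩ : x ∈ Set.range q := (pSub q).edge_vert h
    obtain ⟨j, rfl⟩ : y ∈ Set.range q := (pSub q).edge_vert h.symm
    exact (hadj i j).2 ((pSub_adj_of_inj hq i j).1 h)

set_option maxRecDepth 10000 in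
lemma auto5 : ∀ σ : Equiv.Perm (Fin 5),
    (∀ i j : Fin 5, (((σ i : ℕ)+1 = (σ j : ℕ) ∨ (σ j : ℕ)+1 = (σ i : ℕ)) ↔
      ((i : ℕ)+1 = (j : ℕ) ∨ (j : ℕ)+1 = (i : ℕ)))) →
    (∀ i, σ i = i) ∨ (∀ i, σ i = i.rev) := by decide

lemma pSub_inj {q q' : Fin 5 → Fin n} (hq : Function.Injective q)
    (hq' : Function.Injective q') (h : pSub q = pSub q') : q' = q ∨ q' = q ∘ Fin.rev := by
  have hrange : Set.range q = Set.range q' := by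
    have := congrArg Subgraph.verts h; simpa [pSub_verts] using this
  have hσ : ∀ i : Fin 5, ∃ j, q j = q' i := fun i => by
    rw [← Set.mem_range, hrange]; exact Set.mem_range_self i
  choose σ hσ using hσ
  have hinj : Function.Injective σ := fun i j hij => hq' (by rw [← hσ, ← hσ, hij])
  have hA : ∀ i j, (pathGraph 5).Adj (σ i) (σ j) ↔ (pathGraph 5).Adj i j := by
    intro i j
    rw [← pSub_adj_of_inj hq, hσ, hσ, h, pSub_adj_of_inj hq']
  have hsurj : Function.Surjective σ := Finite.surjective_of_injective hinj
  have := auto5 (Equiv.ofBijective σ ⟨hinj, hsurj⟩) (fun i j => by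
    have := hA i j; rw [pathGraph_adj, pathGraph_adj] at this; exact this)
  obtain h1 | h1 := this
  · left; funext i; rw [← hσ]; exact congrArg q (h1 i)
  · right; funext i; rw [← hσ]; exact congrArg q (h1 i)

def vec5 {α : Type*} (p0 p1 p2 p3 p4 : α) : Fin 5 → α := fun i =>
  match i with
  | ⟨0,_⟩ => p0
  | ⟨1,_⟩ => p1
  | ⟨2,_⟩ => p2
  | ⟨3,_⟩ => p3
  | ⟨4,_⟩ => p4

@[simp] lemma vec5_0 {α : Type*} (p0 p1 p2 p3 p4 : α) : vec5 p0 p1 p2 p3 p4 0 = p0 := rfl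
@[simp] lemma vec5_1 {α : Type*} (p0 p1 p2 p3 p4 : α) : vec5 p0 p1 p2 p3 p4 1 = p1 := rfl
@[simp] lemma vec5_2 {α : Type*} (p0 p1 p2 p3 p4 : α) : vec5 p0 p1 p2 p3 p4 2 = p2 := rfl
@[simp] lemma vec5_3 {α : Type*} (p0 p1 p2 p3 p4 : α) : vec5 p0 p1 p2 p3 p4 3 = p3 := rfl
@[simp] lemma vec5_4 {α : Type*} (p0 p1 p2 p3 p4 : α) : vec5 p0 p1 p2 p3 p4 4 = p4 := rfl

lemma vec5_inj {α : Type*} {p0 p1 p2 p3 p4 : α} (h01 : p0 ≠ p1) (h02 : p0 ≠ p2)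
    (h03 : p0 ≠ p3) (h04 : p0 ≠ p4) (h12 : p1 ≠ p2) (h13 : p1 ≠ p3) (h14 : p1 ≠ p4)
    (h23 : p2 ≠ p3) (h24 : p2 ≠ p4) (h34 : p3 ≠ p4) :
    Function.Injective (vec5 p0 p1 p2 p3 p4) := by
  intro i j hij
  fin_cases i <;> fin_cases j <;> simp only [vec5] at hij ⊢ <;> first | rfl | tauto

section aux
variable {α : Type*}

def uu9 (a b d : α) : Fin 9 → α := fun j => match j with
  | ⟨0,_⟩ => a | ⟨1,_⟩ => a | ⟨2,_⟩ => b | ⟨3,_⟩ => b | ⟨4,_⟩ => d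
  | ⟨5,_⟩ => d | ⟨6,_⟩ => a | ⟨7,_⟩ => a | ⟨8,_⟩ => b

def ww9 (a b d : α) : Fin 9 → α := fun j => match j with
  | ⟨0,_⟩ => b | ⟨1,_⟩ => d | ⟨2,_⟩ => a | ⟨3,_⟩ => d | ⟨4,_⟩ => a
  | ⟨5,_⟩ => b | ⟨6,_⟩ => b | ⟨7,_⟩ => d | ⟨8,_⟩ => d

variable {a b d : α} (hab : a ≠ b) (had : a ≠ d) (hbd : b ≠ d)

lemma uu9_mem (j : Fin 9) : uu9 a b d j = a ∨ uu9 a b d j = b ∨ uu9 a b d j = d := by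
  fin_cases j <;> simp [uu9]

lemma ww9_mem (j : Fin 9) : ww9 a b d j = a ∨ ww9 a b d j = b ∨ ww9 a b d j = d := by
  fin_cases j <;> simp [ww9]

include hab had hbd in
lemma uw_ne (j : Fin 9) : uu9 a b d j ≠ ww9 a b d j := by
  fin_cases j <;>
    first
    | exact hab
    | exact had
    | exact hbd
    | exact Ne.symm hab
    | exact Ne.symm had
    | exact Ne.symm hbd

include hab had hbd in
lemma uw_inj6 {j j' : Fin 9} (h : j.val < 6) (h' : j'.val < 6)
    (h1 : uu9 a b d j = uu9 a b d j') (h2 : ww9 a b d j = ww9 a b d j') : j = j' := by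
  fin_cases j <;> fin_cases j' <;> simp_all [uu9, ww9] <;> omega

include hab had hbd in
lemma uw_inj9 {j j' : Fin 9} (h : 6 ≤ j.val) (h' : 6 ≤ j'.val)
    (h1 : uu9 a b d j = uu9 a b d j') (h2 : ww9 a b d j = ww9 a b d j') : j = j' := by
  fin_cases j <;> fin_cases j' <;> simp_all [uu9, ww9] <;> omega

include hab had hbd in
lemma uw_norev {j j' : Fin 9} (h : 6 ≤ j.val) (h' : 6 ≤ j'.val)
    (h1 : uu9 a b d j' = ww9 a b d j) (h2 : ww9 a b d j' = uu9 a b d j) : False := by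
  fin_cases j <;> fin_cases j' <;> simp_all [uu9, ww9]

lemma exists_j6 {u w : α} (hu : u = a ∨ u = b ∨ u = d) (hw : w = a ∨ w = b ∨ w = d)
    (huw : u ≠ w) : ∃ j : Fin 9, j.val < 6 ∧ uu9 a b d j = u ∧ ww9 a b d j = w := by
  rcases hu with rfl | rfl | rfl <;> rcases hw with rfl | rfl | rfl
  · exact absurd rfl huw
  · exact ⟨0, by decide, rfl, rfl⟩
  · exact ⟨1, by decide, rfl, rfl⟩
  · exact ⟨2, by decide, rfl, rfl⟩
  · exact absurd rfl huw
  · exact ⟨3, by decide, rfl, rfl⟩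
  · exact ⟨4, by decide, rfl, rfl⟩
  · exact ⟨5, by decide, rfl, rfl⟩
  · exact absurd rfl huw

lemma exists_j9 {u w : α} (hu : u = a ∨ u = b ∨ u = d) (hw : w = a ∨ w = b ∨ w = d)
    (huw : u ≠ w) : ∃ j : Fin 9, 6 ≤ j.val ∧
      ((uu9 a b d j = u ∧ ww9 a b d j = w) ∨ (uu9 a b d j = w ∧ ww9 a b d j = u)) := by
  rcases hu with rfl | rfl | rfl <;> rcases hw with rfl | rfl | rfl
  · exact absurd rfl huw
  · exact ⟨6, by decide, Or.inl ⟨rfl, rfl⟩⟩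
  · exact ⟨7, by decide, Or.inl ⟨rfl, rfl⟩⟩
  · exact ⟨6, by decide, Or.inr ⟨rfl, rfl⟩⟩
  · exact absurd rfl huw
  · exact ⟨8, by decide, Or.inl ⟨rfl, rfl⟩⟩
  · exact ⟨7, by decide, Or.inr ⟨rfl, rfl⟩⟩
  · exact ⟨8, by decide, Or.inr ⟨rfl, rfl⟩⟩
  · exact absurd rfl huw

end aux

lemma vec5_eta {α : Type*} (q : Fin 5 → α) : vec5 (q 0) (q 1) (q 2) (q 3) (q 4) = q := by
  funext i; fin_cases i <;> rfl

lemma vec5_rev {α : Type*} (p0 p1 p2 p3 p4 : α) :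
    vec5 p0 p1 p2 p3 p4 ∘ Fin.rev = vec5 p4 p3 p2 p1 p0 := by
  funext i; fin_cases i <;> rfl

lemma idxlem : ∀ α β1 β2 : Fin 5,
    (((α : ℕ)+1 = (β1 : ℕ) ∨ (β1 : ℕ)+1 = (α : ℕ)) ∧
     ((α : ℕ)+1 = (β2 : ℕ) ∨ (β2 : ℕ)+1 = (α : ℕ)) ∧ β1 ≠ β2) →
    ((α = 1 ∧ ((β1 = 0 ∧ β2 = 2) ∨ (β1 = 2 ∧ β2 = 0))) ∨
     (α = 2 ∧ ((β1 = 1 ∧ β2 = 3) ∨ (β1 = 3 ∧ β2 = 1))) ∨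
     (α = 3 ∧ ((β1 = 2 ∧ β2 = 4) ∨ (β1 = 4 ∧ β2 = 2)))) := by decide

lemma edge_pos {n : ℕ} {q : Fin 5 → Fin n} {z u : Fin n}
    (h : s(z, u) ∈ (pSub q).edgeSet) : ∃ α β : Fin 5, q α = z ∧ q β = u ∧
      ∃ k : Fin 4, (α = k.castSucc ∧ β = k.succ) ∨ (β = k.castSucc ∧ α = k.succ) := by
  rw [pSub_edge] at h
  obtain ⟨k, he, -⟩ := h
  rw [Sym2.eq_iff] at he
  obtain ⟨h1, h2⟩ | ⟨h1, h2⟩ := he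
  · exact ⟨k.castSucc, k.succ, h1.symm, h2.symm, k, Or.inl ⟨rfl, rfl⟩⟩
  · exact ⟨k.succ, k.castSucc, h1.symm, h2.symm, k, Or.inr ⟨rfl, rfl⟩⟩

lemma star_structure {n : ℕ} {q : Fin 5 → Fin n} (hq : Function.Injective q) {z u1 u2 : Fin n}
    (h1 : s(z, u1) ∈ (pSub q).edgeSet) (h2 : s(z, u2) ∈ (pSub q).edgeSet) (hu : u1 ≠ u2) :
    (q 1 = z ∧ ((q 0 = u1 ∧ q 2 = u2) ∨ (q 0 = u2 ∧ q 2 = u1))) ∨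
    (q 2 = z ∧ ((q 1 = u1 ∧ q 3 = u2) ∨ (q 1 = u2 ∧ q 3 = u1))) ∨
    (q 3 = z ∧ ((q 2 = u1 ∧ q 4 = u2) ∨ (q 2 = u2 ∧ q 4 = u1))) := by
  obtain ⟨α1, β1, hz1, hu1, hk1⟩ := edge_pos h1
  obtain ⟨α2, β2, hz2, hu2, hk2⟩ := edge_pos h2
  obtain rfl : α1 = α2 := hq (hz1.trans hz2.symm)
  have hβ : β1 ≠ β2 := fun h => hu (hu1.symm.trans (h ▸ hu2))
  obtain ⟨rfl, ⟨rfl, rfl⟩ | ⟨rfl, rfl⟩⟩ | ⟨rfl, ⟨rfl, rfl⟩ | ⟨rfl, rfl⟩⟩ |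
      ⟨rfl, ⟨rfl, rfl⟩ | ⟨rfl, rfl⟩⟩ :=
    idxlem α1 β1 β2 ⟨(idx5 α1 β1).mpr hk1, (idx5 α1 β2).mpr hk2, hβ⟩
  · exact Or.inl ⟨hz1, Or.inl ⟨hu1, hu2⟩⟩
  · exact Or.inl ⟨hz1, Or.inr ⟨hu2, hu1⟩⟩
  · exact Or.inr (Or.inl ⟨hz1, Or.inl ⟨hu1, hu2⟩⟩)
  · exact Or.inr (Or.inl ⟨hz1, Or.inr ⟨hu2, hu1⟩⟩)
  · exact Or.inr (Or.inr ⟨hz1, Or.inl ⟨hu1, hu2⟩⟩)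
  · exact Or.inr (Or.inr ⟨hz1, Or.inr ⟨hu2, hu1⟩⟩)

def qq9 {α : Type*} (v a b d : α) (j : Fin 9) (x y : α) : Fin 5 → α :=
  if (j : ℕ) < 6 then vec5 (uu9 a b d j) v (ww9 a b d j) x y
  else vec5 x (uu9 a b d j) v (ww9 a b d j) y

lemma qq9_lt {α : Type*} {v a b d : α} {j : Fin 9} {x y : α} (h : (j : ℕ) < 6) :
    qq9 v a b d j x y = vec5 (uu9 a b d j) v (ww9 a b d j) x y := if_pos h

lemma qq9_ge {α : Type*} {v a b d : α} {j : Fin 9} {x y : α} (h : ¬ (j : ℕ) < 6) :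
    qq9 v a b d j x y = vec5 x (uu9 a b d j) v (ww9 a b d j) y := if_neg h

lemma vec5_comp_eq {α : Type*} {p0 p1 p2 p3 p4 q0 q1 q2 q3 q4 : α}
    (h : vec5 p0 p1 p2 p3 p4 = vec5 q0 q1 q2 q3 q4) :
    p0 = q0 ∧ p1 = q1 ∧ p2 = q2 ∧ p3 = q3 ∧ p4 = q4 :=
  ⟨congrFun h 0, congrFun h 1, congrFun h 2, congrFun h 3, congrFun h 4⟩

theorem stmt_18 (t : ℕ) (ht : 5 ≤ t) (c : Sym2 (Fin t) → ℕ) (r : ℕ)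
    (v a b d : Fin t) (hva : v ≠ a) (hvb : v ≠ b) (hvd : v ≠ d)
    (hab : a ≠ b) (had : a ≠ d) (hbd : b ≠ d)
    (hstar : {e ∈ (⊤ : SimpleGraph (Fin t)).edgeSet | c e = r} =
      ({s(v, a), s(v, b), s(v, d)} : Set (Sym2 (Fin t))))
    (hsingle : ∀ e ∈ (⊤ : SimpleGraph (Fin t)).edgeSet,
      ∀ f ∈ (⊤ : SimpleGraph (Fin t)).edgeSet, e ≠ f → c e = c f → c e = r) :
    Nat.card {H : (⊤ : SimpleGraph (Fin t)).Subgraph //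
      Nonempty (H.coe ≃g pathGraph 5) ∧
      ∃ e ∈ H.edgeSet, ∃ f ∈ H.edgeSet, e ≠ f ∧ c e = c f} = 9 * (t - 3) * (t - 4) := by
  classical
  set U : Fin 9 → Fin t := uu9 a b d with hUdef
  set W : Fin 9 → Fin t := ww9 a b d with hWdef
  have hU : ∀ j, U j = a ∨ U j = b ∨ U j = d := uu9_mem
  have hW : ∀ j, W j = a ∨ W j = b ∨ W j = d := ww9_mem
  have hvU : ∀ j, v ≠ U j := by
    intro j; rcases hU j with h | h | h <;> rw [h] <;> assumption
  have hvW : ∀ j, v ≠ W j := by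
    intro j; rcases hW j with h | h | h <;> rw [h] <;> assumption
  have hUW : ∀ j, U j ≠ W j := uw_ne hab had hbd
  -- colors of star edges
  have hcs : ∀ u : Fin t, (u = a ∨ u = b ∨ u = d) → c s(v, u) = r := by
    rintro u hu
    have hmem : s(v, u) ∈ {e ∈ (⊤ : SimpleGraph (Fin t)).edgeSet | c e = r} := by
      rw [hstar]; rcases hu with rfl | rfl | rfl <;> simp
    exact hmem.2
  have hmemstar : ∀ e ∈ (⊤ : SimpleGraph (Fin t)).edgeSet, c e = r →
      (e = s(v, a) ∨ e = s(v, b) ∨ e = s(v, d)) := by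
    intro e he hce
    have : e ∈ {e ∈ (⊤ : SimpleGraph (Fin t)).edgeSet | c e = r} := ⟨he, hce⟩
    rw [hstar] at this
    simpa using this
  set P : Fin 9 × Fin t × Fin t → Prop := fun p =>
    p.2.1 ≠ v ∧ p.2.1 ≠ U p.1 ∧ p.2.1 ≠ W p.1 ∧
    p.2.2 ≠ v ∧ p.2.2 ≠ U p.1 ∧ p.2.2 ≠ W p.1 ∧ p.2.1 ≠ p.2.2 with hPdef
  -- injectivity of the parametrized vertex maps
  have hQinj : ∀ j x y, P (j, x, y) → Function.Injective (qq9 v a b d j x y) := by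
    rintro j x y ⟨hx1, hx2, hx3, hy1, hy2, hy3, hxy⟩
    by_cases h6 : (j : ℕ) < 6
    · rw [qq9_lt h6]
      exact vec5_inj (hvU j).symm (hUW j) hx2.symm hy2.symm (hvW j) hx1.symm hy1.symm
        hx3.symm hy3.symm hxy
    · rw [qq9_ge h6]
      exact vec5_inj hx2 hx1 hx3 hxy (hvU j).symm (hUW j) hy2.symm (hvW j) hy1.symm hy3.symm
  -- star edges of the parametrized subgraphs
  have hQedge : ∀ j x y, s(v, U j) ∈ (pSub (qq9 v a b d j x y)).edgeSet ∧
      s(v, W j) ∈ (pSub (qq9 v a b d j x y)).edgeSet := by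
    intro j x y
    by_cases h6 : (j : ℕ) < 6
    · rw [qq9_lt h6]
      exact ⟨(pSub_edge _).mpr ⟨0, Sym2.eq_swap, (hvU j).symm⟩,
        (pSub_edge _).mpr ⟨1, rfl, hvW j⟩⟩
    · rw [qq9_ge h6]
      exact ⟨(pSub_edge _).mpr ⟨1, Sym2.eq_swap, (hvU j).symm⟩,
        (pSub_edge _).mpr ⟨2, rfl, hvW j⟩⟩
  have hGood : ∀ p : Fin 9 × Fin t × Fin t, P p →
      (Nonempty ((pSub (qq9 v a b d p.1 p.2.1 p.2.2)).coe ≃g pathGraph 5) ∧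
       ∃ e ∈ (pSub (qq9 v a b d p.1 p.2.1 p.2.2)).edgeSet,
       ∃ f ∈ (pSub (qq9 v a b d p.1 p.2.1 p.2.2)).edgeSet, e ≠ f ∧ c e = c f) := by
    rintro ⟨j, x, y⟩ hp
    refine ⟨⟨pSub_iso (hQinj j x y hp)⟩, s(v, U j), (hQedge j x y).1, s(v, W j),
      (hQedge j x y).2, ?_, ?_⟩
    · exact fun h => hUW j (Sym2.congr_right.mp h)
    · exact (hcs (U j) (hU j)).trans (hcs (W j) (hW j)).symm
  set Gm : {p : Fin 9 × Fin t × Fin t // P p} →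
      {H : (⊤ : SimpleGraph (Fin t)).Subgraph //
        Nonempty (H.coe ≃g pathGraph 5) ∧
        ∃ e ∈ H.edgeSet, ∃ f ∈ H.edgeSet, e ≠ f ∧ c e = c f} :=
    fun p => ⟨pSub (qq9 v a b d p.1.1 p.1.2.1 p.1.2.2), hGood p.1 p.2⟩ with hGmdef
  have hinj : Function.Injective Gm := by
    rintro ⟨⟨j, x, y⟩, hx1, hx2, hx3, hy1, hy2, hy3, hxy⟩
      ⟨⟨j', x', y'⟩, hx1', hx2', hx3', hy1', hy2', hy3', hxy'⟩ hGG
    have hps : pSub (qq9 v a b d j x y) = pSub (qq9 v a b d j' x' y') :=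
      congrArg Subtype.val hGG
    have hcases := pSub_inj (hQinj j x y ⟨hx1, hx2, hx3, hy1, hy2, hy3, hxy⟩)
      (hQinj j' x' y' ⟨hx1', hx2', hx3', hy1', hy2', hy3', hxy'⟩) hps
    by_cases h6 : (j : ℕ) < 6 <;> by_cases h6' : (j' : ℕ) < 6
    · rw [qq9_lt h6, qq9_lt h6'] at hcases
      rcases hcases with hEq | hEq
      · obtain ⟨e0, e1, e2, e3, e4⟩ := vec5_comp_eq hEq
        have hjj : j' = j := uw_inj6 hab had hbd h6' h6 e0 e2
        refine Subtype.ext ?_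
        simp only [Prod.mk.injEq]
        exact ⟨hjj.symm, e3.symm, e4.symm⟩
      · rw [vec5_rev] at hEq
        obtain ⟨e0, e1, e2, e3, e4⟩ := vec5_comp_eq hEq
        exact absurd e1.symm hx1
    · rw [qq9_lt h6, qq9_ge h6'] at hcases
      rcases hcases with hEq | hEq
      · obtain ⟨e0, e1, e2, e3, e4⟩ := vec5_comp_eq hEq
        exact absurd e1.symm (hvU j')
      · rw [vec5_rev] at hEq
        obtain ⟨e0, e1, e2, e3, e4⟩ := vec5_comp_eq hEq
        exact absurd e2 (hvW j)
    · rw [qq9_ge h6, qq9_lt h6'] at hcases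
      rcases hcases with hEq | hEq
      · obtain ⟨e0, e1, e2, e3, e4⟩ := vec5_comp_eq hEq
        exact absurd e1 (hvU j)
      · rw [vec5_rev] at hEq
        obtain ⟨e0, e1, e2, e3, e4⟩ := vec5_comp_eq hEq
        exact absurd e1 (hvW j)
    · rw [qq9_ge h6, qq9_ge h6'] at hcases
      rcases hcases with hEq | hEq
      · obtain ⟨e0, e1, e2, e3, e4⟩ := vec5_comp_eq hEq
        have hjj : j' = j := uw_inj9 hab had hbd (le_of_not_gt h6') (le_of_not_gt h6) e1 e3
        refine Subtype.ext ?_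
        simp only [Prod.mk.injEq]
        exact ⟨hjj.symm, e0.symm, e4.symm⟩
      · rw [vec5_rev] at hEq
        obtain ⟨e0, e1, e2, e3, e4⟩ := vec5_comp_eq hEq
        exact absurd (uw_norev hab had hbd (le_of_not_gt h6) (le_of_not_gt h6') e1 e3) id
  have hsurj : Function.Surjective Gm := by
    rintro ⟨H, ⟨φ⟩, e, he, f, hf, hef, hcc⟩
    obtain ⟨q, hq, rfl⟩ := exists_pSub φ
    have heT : e ∈ (⊤ : SimpleGraph (Fin t)).edgeSet := (pSub q).edgeSet_subset he
    have hfT : f ∈ (⊤ : SimpleGraph (Fin t)).edgeSet := (pSub q).edgeSet_subset hf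
    have hce : c e = r := hsingle e heT f hfT hef hcc
    have hcf : c f = r := hsingle f hfT e heT hef.symm hcc.symm
    obtain ⟨u1, hu1, rfl⟩ : ∃ u, (u = a ∨ u = b ∨ u = d) ∧ e = s(v, u) := by
      rcases hmemstar e heT hce with rfl | rfl | rfl
      exacts [⟨a, Or.inl rfl, rfl⟩, ⟨b, Or.inr (Or.inl rfl), rfl⟩, ⟨d, Or.inr (Or.inr rfl), rfl⟩]
    obtain ⟨u2, hu2, rfl⟩ : ∃ u, (u = a ∨ u = b ∨ u = d) ∧ f = s(v, u) := by
      rcases hmemstar f hfT hcf with rfl | rfl | rfl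
      exacts [⟨a, Or.inl rfl, rfl⟩, ⟨b, Or.inr (Or.inl rfl), rfl⟩, ⟨d, Or.inr (Or.inr rfl), rfl⟩]
    have hu12 : u1 ≠ u2 := fun h => hef (by rw [h])
    have hmem2 : ∀ w : Fin t, (w = u1 ∨ w = u2) → (w = a ∨ w = b ∨ w = d) := by
      rintro w (rfl | rfl) <;> assumption
    rcases star_structure hq he hf hu12 with ⟨hv1, hc⟩ | ⟨hv2, hc⟩ | ⟨hv3, hc⟩
    · -- v at position 1
      obtain ⟨j, hj6, hjU, hjW⟩ := exists_j6 (hmem2 _ (hc.imp And.left And.left))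
        (hmem2 _ (hc.imp And.right And.right).symm) (hq.ne (by decide))
      refine ⟨⟨(j, q 3, q 4), ?_, ?_, ?_, ?_, ?_, ?_, ?_⟩, Subtype.ext ?_⟩
      · rw [← hv1]; exact hq.ne (by decide)
      · rw [hUdef, hjU]; exact hq.ne (by decide)
      · rw [hWdef, hjW]; exact hq.ne (by decide)
      · rw [← hv1]; exact hq.ne (by decide)
      · rw [hUdef, hjU]; exact hq.ne (by decide)
      · rw [hWdef, hjW]; exact hq.ne (by decide)
      · exact hq.ne (by decide)
      · show pSub (qq9 v a b d j (q 3) (q 4)) = pSub q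
        rw [qq9_lt hj6, hjU, hjW, ← hv1, vec5_eta]
    · -- v at position 2
      obtain ⟨j, hj9, hcase⟩ := exists_j9 (hmem2 _ (hc.imp And.left And.left))
        (hmem2 _ (hc.imp And.right And.right).symm) (hq.ne (by decide))
      have hj6 : ¬ (j : ℕ) < 6 := by omega
      rcases hcase with ⟨hjU, hjW⟩ | ⟨hjU, hjW⟩
      · refine ⟨⟨(j, q 0, q 4), ?_, ?_, ?_, ?_, ?_, ?_, ?_⟩, Subtype.ext ?_⟩
        · rw [← hv2]; exact hq.ne (by decide)
        · rw [hUdef, hjU]; exact hq.ne (by decide)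
        · rw [hWdef, hjW]; exact hq.ne (by decide)
        · rw [← hv2]; exact hq.ne (by decide)
        · rw [hUdef, hjU]; exact hq.ne (by decide)
        · rw [hWdef, hjW]; exact hq.ne (by decide)
        · exact hq.ne (by decide)
        · show pSub (qq9 v a b d j (q 0) (q 4)) = pSub q
          rw [qq9_ge hj6, hjU, hjW, ← hv2, vec5_eta]
      · refine ⟨⟨(j, q 4, q 0), ?_, ?_, ?_, ?_, ?_, ?_, ?_⟩, Subtype.ext ?_⟩
        · rw [← hv2]; exact hq.ne (by decide)
        · rw [hUdef, hjU]; exact hq.ne (by decide)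
        · rw [hWdef, hjW]; exact hq.ne (by decide)
        · rw [← hv2]; exact hq.ne (by decide)
        · rw [hUdef, hjU]; exact hq.ne (by decide)
        · rw [hWdef, hjW]; exact hq.ne (by decide)
        · exact hq.ne (by decide)
        · show pSub (qq9 v a b d j (q 4) (q 0)) = pSub q
          have hcomp : qq9 v a b d j (q 4) (q 0) = q ∘ Fin.rev := by
            rw [qq9_ge hj6, hjU, hjW, ← hv2]
            exact vec5_eta (q ∘ Fin.rev)
          rw [hcomp, pSub_rev]
    · -- v at position 3
      obtain ⟨j, hj6, hjU, hjW⟩ := exists_j6 (hmem2 _ (hc.imp And.right And.right).symm)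
        (hmem2 _ (hc.imp And.left And.left)) (hq.ne (by decide))
      refine ⟨⟨(j, q 1, q 0), ?_, ?_, ?_, ?_, ?_, ?_, ?_⟩, Subtype.ext ?_⟩
      · rw [← hv3]; exact hq.ne (by decide)
      · rw [hUdef, hjU]; exact hq.ne (by decide)
      · rw [hWdef, hjW]; exact hq.ne (by decide)
      · rw [← hv3]; exact hq.ne (by decide)
      · rw [hUdef, hjU]; exact hq.ne (by decide)
      · rw [hWdef, hjW]; exact hq.ne (by decide)
      · exact hq.ne (by decide)
      · show pSub (qq9 v a b d j (q 1) (q 0)) = pSub q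
        have hcomp : qq9 v a b d j (q 1) (q 0) = q ∘ Fin.rev := by
          rw [qq9_lt hj6, hjU, hjW, ← hv3]
          exact vec5_eta (q ∘ Fin.rev)
        rw [hcomp, pSub_rev]
  -- counting
  rw [← Nat.card_congr (Equiv.ofBijective Gm ⟨hinj, hsurj⟩)]
  have hsig : Nat.card {p : Fin 9 × Fin t × Fin t // P p} =
      ∑ j : Fin 9, Nat.card {xy : Fin t × Fin t // P (j, xy)} := by
    rw [Nat.card_congr
      (⟨fun p => ⟨p.1.1, ⟨p.1.2, p.2⟩⟩, fun s => ⟨(s.1, s.2.1), s.2.2⟩,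
        fun p => rfl, fun s => rfl⟩ :
        {p : Fin 9 × Fin t × Fin t // P p} ≃ Σ j : Fin 9, {xy : Fin t × Fin t // P (j, xy)})]
    rw [Nat.card_eq_fintype_card, Fintype.card_sigma]
    simp [Nat.card_eq_fintype_card]
  rw [hsig]
  have hcard : ∀ j : Fin 9, Nat.card {xy : Fin t × Fin t // P (j, xy)} = (t - 3) * (t - 4) := by
    intro j
    have hBcard : ({v, U j, W j} : Finset (Fin t)).card = 3 :=
      Finset.card_eq_three.mpr ⟨v, U j, W j, hvU j, hvW j, hUW j, rfl⟩
    have hEquiv : {xy : Fin t × Fin t // P (j, xy)} ≃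
        {xy : Fin t × Fin t // xy ∈ (({v, U j, W j} : Finset (Fin t))ᶜ).offDiag} := by
      apply Equiv.subtypeEquivRight
      intro xy
      rw [Finset.mem_offDiag]
      simp only [hPdef, Finset.mem_compl, Finset.mem_insert, Finset.mem_singleton]
      tauto
    rw [Nat.card_congr hEquiv, Nat.card_eq_fintype_card, Fintype.card_coe,
      Finset.offDiag_card, Finset.card_compl, hBcard, Fintype.card_fin]
    rw [show t - 4 = (t - 3) - 1 by omega, Nat.mul_sub_one]
  simp only [hcard, Finset.sum_const, Finset.card_univ, Fintype.card_fin, smul_eq_mul]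
  ring
end
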